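/- arXiv:2105.06124 — 6 statements merged into one kernel-verified Lean document; each statement's English description precedes it below -/
import Mathlib

section
/- Suppose there are n worker nodes, each of which independently belongs to the slow class with probability p̂ and to the active class with probability 1−p̂ (classes fixed for the whole experiment). In each of L iterations, a uniformly random permutation (independent across iterations and independent of the class assignment) assigns a set of s distinct workers to a data-set D; each assigned worker then straggles with probability p_ss if slow and p_as if active, independently across workers and across iterations. Say D is 'not accessed' in an iteration if all s workers assigned to it in that iteration straggle. Then the expected number of iterations (out of L) in which D is not accessed equals L · (p̂·p_ss + (1−p̂)·p_as)^s. -/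
set_option maxHeartbeats 1000000

open Finset

/-- Sum over all functions of a product factorizes coordinatewise. -/
private lemma sum_fun_prod {ι α : Type*} [Fintype ι] [DecidableEq ι] [Fintype α]
    [DecidableEq α] (f : ι → α → ℝ) :
    ∑ g : ι → α, ∏ i, f i (g i) = ∏ i, ∑ a, f i a := by
  rw [← Fintype.piFinset_univ]
  exact (Finset.prod_univ_sum _ _).symm

theorem expected_not_accessed_shuffling
    (L n s : ℕ) (hs : s ≤ n) (phat p_ss p_as : ℝ)
    (hp0 : 0 ≤ phat) (hp1 : phat ≤ 1)
    (hss0 : 0 ≤ p_ss) (hss1 : p_ss ≤ 1) (has0 : 0 ≤ p_as) (has1 : p_as ≤ 1) :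
    ∑ c : Fin n → Bool, ∑ π : Fin L → Equiv.Perm (Fin n),
      ∑ ω : Fin L → Fin n → Bool,
      ((∏ i : Fin n, (if c i then phat else 1 - phat)) *
        ((n.factorial : ℝ)⁻¹) ^ L *
        (∏ ℓ : Fin L, ∏ i : Fin n,
          (if ω ℓ i then (if c i then p_ss else p_as)
           else 1 - (if c i then p_ss else p_as)))) *
      ((Finset.univ.filter
          (fun ℓ : Fin L =>
            ∀ i : Fin n, (i : ℕ) < s → ω ℓ (π ℓ i) = true)).card : ℝ)
    = (L : ℝ) * (phat * p_ss + (1 - phat) * p_as) ^ s := by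
  classical
  set r : ℝ := phat * p_ss + (1 - phat) * p_as with hr
  set T : Finset (Fin n) := Finset.univ.filter (fun i : Fin n => (i : ℕ) < s) with hT
  have hTcard : T.card = s := by
    have hmap : T.map ⟨Fin.val, Fin.val_injective⟩ = Finset.range s := by
      ext a
      simp only [Finset.mem_map, Finset.mem_range, hT, Finset.mem_filter,
        Finset.mem_univ, true_and, Function.Embedding.coeFn_mk]
      constructor
      · rintro ⟨i, hi, rfl⟩; exact hi
      · intro ha; exact ⟨⟨a, lt_of_lt_of_le ha hs⟩, ha, rfl⟩
    simpa using congrArg Finset.card hmap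
  -- notation: S π ℓ is the set of workers assigned in iteration ℓ
  have hScard : ∀ (π : Fin L → Equiv.Perm (Fin n)) (ℓ : Fin L),
      (T.image (π ℓ)).card = s := by
    intro π ℓ
    rw [Finset.card_image_of_injective _ (π ℓ).injective, hTcard]
  -- Step A: sum over ω for fixed ℓ, c, π
  have omega_sum : ∀ (ℓ : Fin L) (c : Fin n → Bool) (π : Fin L → Equiv.Perm (Fin n)),
      ∑ ω : Fin L → Fin n → Bool,
        (∏ ℓ' : Fin L, ∏ i : Fin n,
          (if ω ℓ' i then (if c i then p_ss else p_as)
           else 1 - (if c i then p_ss else p_as))) *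
        (if ∀ i : Fin n, (i : ℕ) < s → ω ℓ (π ℓ i) = true then (1:ℝ) else 0)
      = ∏ j ∈ T.image (π ℓ), (if c j then p_ss else p_as) := by
    intro ℓ c π
    have hind : ∀ g : Fin n → Bool,
        (if ∀ i : Fin n, (i : ℕ) < s → g (π ℓ i) = true then (1:ℝ) else 0)
        = ∏ j ∈ T.image (π ℓ), (if g j = true then (1:ℝ) else 0) := by
      intro g
      by_cases h : ∀ i : Fin n, (i : ℕ) < s → g (π ℓ i) = true
      · rw [if_pos h]
        symm
        refine Finset.prod_eq_one fun j hj => ?_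
        rcases Finset.mem_image.1 hj with ⟨i0, hi0, rfl⟩
        rw [if_pos (h i0 ((Finset.mem_filter.1 hi0).2))]
      · rw [if_neg h]
        push_neg at h
        obtain ⟨i0, hi0, hg⟩ := h
        symm
        refine Finset.prod_eq_zero (Finset.mem_image.2
          ⟨i0, Finset.mem_filter.2 ⟨Finset.mem_univ _, hi0⟩, rfl⟩) ?_
        simp [hg]
    calc ∑ ω : Fin L → Fin n → Bool,
          (∏ ℓ' : Fin L, ∏ i : Fin n,
            (if ω ℓ' i then (if c i then p_ss else p_as)
             else 1 - (if c i then p_ss else p_as))) *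
          (if ∀ i : Fin n, (i : ℕ) < s → ω ℓ (π ℓ i) = true then (1:ℝ) else 0)
        = ∑ ω : Fin L → Fin n → Bool, ∏ ℓ' : Fin L,
            ((∏ i : Fin n,
              (if ω ℓ' i then (if c i then p_ss else p_as)
               else 1 - (if c i then p_ss else p_as))) *
             (if ℓ' = ℓ then
                (if ∀ i : Fin n, (i : ℕ) < s → ω ℓ' (π ℓ i) = true then (1:ℝ) else 0)
              else 1)) := by
          refine Finset.sum_congr rfl fun ω _ => ?_
          rw [Finset.prod_mul_distrib]
          congr 1
          rw [Finset.prod_ite_eq' Finset.univ ℓ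
            (fun ℓ' => (if ∀ i : Fin n, (i : ℕ) < s → ω ℓ' (π ℓ i) = true then (1:ℝ) else 0))]
          simp
      _ = ∏ ℓ' : Fin L, ∑ g : Fin n → Bool,
            ((∏ i : Fin n,
              (if g i then (if c i then p_ss else p_as)
               else 1 - (if c i then p_ss else p_as))) *
             (if ℓ' = ℓ then
                (if ∀ i : Fin n, (i : ℕ) < s → g (π ℓ i) = true then (1:ℝ) else 0)
              else 1)) := by
          exact sum_fun_prod (fun (ℓ' : Fin L) (g : Fin n → Bool) =>
            (∏ i : Fin n,
              (if g i then (if c i then p_ss else p_as)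
               else 1 - (if c i then p_ss else p_as))) *
             (if ℓ' = ℓ then
                (if ∀ i : Fin n, (i : ℕ) < s → g (π ℓ i) = true then (1:ℝ) else 0)
              else 1))
      _ = ∏ ℓ' : Fin L, (if ℓ' = ℓ then
            ∏ j ∈ T.image (π ℓ), (if c j then p_ss else p_as) else 1) := by
          refine Finset.prod_congr rfl fun ℓ' _ => ?_
          by_cases hℓ : ℓ' = ℓ
          · simp only [hℓ, if_true]
            calc ∑ g : Fin n → Bool,
                  (∏ i : Fin n,
                    (if g i then (if c i then p_ss else p_as)
                     else 1 - (if c i then p_ss else p_as))) *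
                  (if ∀ i : Fin n, (i : ℕ) < s → g (π ℓ i) = true then (1:ℝ) else 0)
                = ∑ g : Fin n → Bool, ∏ i : Fin n,
                    ((if g i then (if c i then p_ss else p_as)
                      else 1 - (if c i then p_ss else p_as)) *
                     (if i ∈ T.image (π ℓ) then (if g i = true then (1:ℝ) else 0) else 1)) := by
                  refine Finset.sum_congr rfl fun g _ => ?_
                  rw [hind g, Finset.prod_mul_distrib]
                  congr 1
                  rw [Finset.prod_ite_mem Finset.univ (T.image (π ℓ))
                    (fun j => (if g j = true then (1:ℝ) else 0)), Finset.univ_inter]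
              _ = ∏ i : Fin n, ∑ t : Bool,
                    ((if t then (if c i then p_ss else p_as)
                      else 1 - (if c i then p_ss else p_as)) *
                     (if i ∈ T.image (π ℓ) then (if t = true then (1:ℝ) else 0) else 1)) := by
                  exact sum_fun_prod (fun (i : Fin n) (t : Bool) =>
                    (if t then (if c i then p_ss else p_as)
                      else 1 - (if c i then p_ss else p_as)) *
                     (if i ∈ T.image (π ℓ) then (if t = true then (1:ℝ) else 0) else 1))
              _ = ∏ i : Fin n, (if i ∈ T.image (π ℓ)
                    then (if c i then p_ss else p_as) else 1) := by
                  refine Finset.prod_congr rfl fun i _ => ?_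
                  rw [Fintype.sum_bool]
                  by_cases hi : i ∈ T.image (π ℓ) <;> simp [hi] <;> ring
              _ = ∏ j ∈ T.image (π ℓ), (if c j then p_ss else p_as) := by
                  rw [Finset.prod_ite_mem Finset.univ (T.image (π ℓ)), Finset.univ_inter]
          · simp only [hℓ, if_false, mul_one]
            rw [sum_fun_prod (fun (i : Fin n) (t : Bool) =>
              (if t then (if c i then p_ss else p_as)
               else 1 - (if c i then p_ss else p_as)))]
            refine Finset.prod_eq_one fun i _ => ?_
            rw [Fintype.sum_bool]
            simp only [if_true, Bool.false_eq_true, if_false]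
            ring
      _ = ∏ j ∈ T.image (π ℓ), (if c j then p_ss else p_as) := by
          simp
  -- Step B: sum over c for fixed ℓ, π
  have c_sum : ∀ (ℓ : Fin L) (π : Fin L → Equiv.Perm (Fin n)),
      ∑ c : Fin n → Bool,
        (∏ i : Fin n, (if c i then phat else 1 - phat)) *
        (∏ j ∈ T.image (π ℓ), (if c j then p_ss else p_as)) = r ^ s := by
    intro ℓ π
    calc ∑ c : Fin n → Bool,
          (∏ i : Fin n, (if c i then phat else 1 - phat)) *
          (∏ j ∈ T.image (π ℓ), (if c j then p_ss else p_as))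
        = ∑ c : Fin n → Bool, ∏ i : Fin n,
            ((if c i then phat else 1 - phat) *
             (if i ∈ T.image (π ℓ) then (if c i then p_ss else p_as) else 1)) := by
          refine Finset.sum_congr rfl fun c _ => ?_
          rw [Finset.prod_mul_distrib]
          congr 1
          rw [Finset.prod_ite_mem Finset.univ (T.image (π ℓ))
            (fun j => (if c j then p_ss else p_as)), Finset.univ_inter]
      _ = ∏ i : Fin n, ∑ t : Bool,
            ((if t then phat else 1 - phat) *
             (if i ∈ T.image (π ℓ) then (if t then p_ss else p_as) else 1)) := by
          exact sum_fun_prod (fun (i : Fin n) (t : Bool) =>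
            (if t then phat else 1 - phat) *
             (if i ∈ T.image (π ℓ) then (if t then p_ss else p_as) else 1))
      _ = ∏ i : Fin n, (if i ∈ T.image (π ℓ) then r else 1) := by
          refine Finset.prod_congr rfl fun i _ => ?_
          rw [Fintype.sum_bool]
          by_cases hi : i ∈ T.image (π ℓ) <;> simp [hi, hr] <;> ring
      _ = r ^ s := by
          rw [Finset.prod_ite_mem Finset.univ (T.image (π ℓ)), Finset.univ_inter,
            Finset.prod_const, hScard π ℓ]
  -- Step C: for each ℓ, full inner sum equals r^s
  have inner_sum : ∀ ℓ : Fin L,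
      ∑ c : Fin n → Bool, ∑ π : Fin L → Equiv.Perm (Fin n),
        ∑ ω : Fin L → Fin n → Bool,
        ((∏ i : Fin n, (if c i then phat else 1 - phat)) *
          ((n.factorial : ℝ)⁻¹) ^ L *
          (∏ ℓ' : Fin L, ∏ i : Fin n,
            (if ω ℓ' i then (if c i then p_ss else p_as)
             else 1 - (if c i then p_ss else p_as)))) *
        (if ∀ i : Fin n, (i : ℕ) < s → ω ℓ (π ℓ i) = true then (1:ℝ) else 0)
      = r ^ s := by
    intro ℓ
    have hfact : ((n.factorial : ℝ)) ≠ 0 := by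
      exact_mod_cast (Nat.factorial_pos n).ne'
    calc ∑ c : Fin n → Bool, ∑ π : Fin L → Equiv.Perm (Fin n),
          ∑ ω : Fin L → Fin n → Bool,
          ((∏ i : Fin n, (if c i then phat else 1 - phat)) *
            ((n.factorial : ℝ)⁻¹) ^ L *
            (∏ ℓ' : Fin L, ∏ i : Fin n,
              (if ω ℓ' i then (if c i then p_ss else p_as)
               else 1 - (if c i then p_ss else p_as)))) *
          (if ∀ i : Fin n, (i : ℕ) < s → ω ℓ (π ℓ i) = true then (1:ℝ) else 0)
        = ∑ c : Fin n → Bool, ∑ π : Fin L → Equiv.Perm (Fin n),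
            (∏ i : Fin n, (if c i then phat else 1 - phat)) *
            ((n.factorial : ℝ)⁻¹) ^ L *
            (∏ j ∈ T.image (π ℓ), (if c j then p_ss else p_as)) := by
          refine Finset.sum_congr rfl fun c _ => Finset.sum_congr rfl fun π _ => ?_
          rw [← omega_sum ℓ c π, Finset.mul_sum]
          refine Finset.sum_congr rfl fun ω _ => by ring
      _ = ∑ π : Fin L → Equiv.Perm (Fin n), ((n.factorial : ℝ)⁻¹) ^ L *
            (∑ c : Fin n → Bool,
              (∏ i : Fin n, (if c i then phat else 1 - phat)) *
              (∏ j ∈ T.image (π ℓ), (if c j then p_ss else p_as))) := by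
          rw [Finset.sum_comm]
          refine Finset.sum_congr rfl fun π _ => ?_
          rw [Finset.mul_sum]
          refine Finset.sum_congr rfl fun c _ => by ring
      _ = ∑ π : Fin L → Equiv.Perm (Fin n), ((n.factorial : ℝ)⁻¹) ^ L * r ^ s := by
          refine Finset.sum_congr rfl fun π _ => by rw [c_sum ℓ π]
      _ = r ^ s := by
          rw [Finset.sum_const, Finset.card_univ, Fintype.card_fun,
            Fintype.card_perm, Fintype.card_fin, Fintype.card_fin, nsmul_eq_mul]
          push_cast
          rw [← mul_assoc, ← mul_pow, mul_inv_cancel₀ hfact, one_pow, one_mul]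
  -- Assemble
  calc ∑ c : Fin n → Bool, ∑ π : Fin L → Equiv.Perm (Fin n),
        ∑ ω : Fin L → Fin n → Bool,
        ((∏ i : Fin n, (if c i then phat else 1 - phat)) *
          ((n.factorial : ℝ)⁻¹) ^ L *
          (∏ ℓ : Fin L, ∏ i : Fin n,
            (if ω ℓ i then (if c i then p_ss else p_as)
             else 1 - (if c i then p_ss else p_as)))) *
        ((Finset.univ.filter
            (fun ℓ : Fin L =>
              ∀ i : Fin n, (i : ℕ) < s → ω ℓ (π ℓ i) = true)).card : ℝ)
      = ∑ c : Fin n → Bool, ∑ π : Fin L → Equiv.Perm (Fin n),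
          ∑ ω : Fin L → Fin n → Bool, ∑ ℓ : Fin L,
          ((∏ i : Fin n, (if c i then phat else 1 - phat)) *
            ((n.factorial : ℝ)⁻¹) ^ L *
            (∏ ℓ' : Fin L, ∏ i : Fin n,
              (if ω ℓ' i then (if c i then p_ss else p_as)
               else 1 - (if c i then p_ss else p_as)))) *
          (if ∀ i : Fin n, (i : ℕ) < s → ω ℓ (π ℓ i) = true then (1:ℝ) else 0) := by
        refine Finset.sum_congr rfl fun c _ => Finset.sum_congr rfl fun π _ =>
          Finset.sum_congr rfl fun ω _ => ?_
        rw [Finset.card_filter]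
        push_cast
        rw [Finset.mul_sum]
    _ = ∑ ℓ : Fin L, ∑ c : Fin n → Bool, ∑ π : Fin L → Equiv.Perm (Fin n),
          ∑ ω : Fin L → Fin n → Bool,
          ((∏ i : Fin n, (if c i then phat else 1 - phat)) *
            ((n.factorial : ℝ)⁻¹) ^ L *
            (∏ ℓ' : Fin L, ∏ i : Fin n,
              (if ω ℓ' i then (if c i then p_ss else p_as)
               else 1 - (if c i then p_ss else p_as)))) *
          (if ∀ i : Fin n, (i : ℕ) < s → ω ℓ (π ℓ i) = true then (1:ℝ) else 0) := by
        refine Eq.trans (Finset.sum_congr rfl fun c _ =>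
          Finset.sum_congr rfl fun π _ => Finset.sum_comm) ?_
        refine Eq.trans (Finset.sum_congr rfl fun c _ => Finset.sum_comm) ?_
        exact Finset.sum_comm
    _ = ∑ ℓ : Fin L, r ^ s := Finset.sum_congr rfl fun ℓ _ => inner_sum ℓ
    _ = (L : ℝ) * r ^ s := by
        rw [Finset.sum_const, Finset.card_univ, Fintype.card_fin, nsmul_eq_mul]
end

section
/- Let n = k·s for positive integers k, s, and let B ∈ ℝ^{n×n} be the FRC encoding matrix, i.e., the block-diagonal matrix with k diagonal blocks each equal to the s×s all-ones matrix. For a subset S ⊆ {1,…,n} with |S| = r, let A_S denote the n×r submatrix of B formed by the columns indexed by S, and define err(A_S) := min over x ∈ ℝ^r of ‖A_S x − 1_n‖₂², where 1_n is the all-ones vector of length n. If S is chosen uniformly at random among all subsets of {1,…,n} of size r, then E[err(A_S)] = n · C(n−s, r) / C(n, r). -/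
/-- The FRC encoding matrix for `n = k·s` workers: block-diagonal with `k`
diagonal blocks each equal to the `s × s` all-ones matrix, i.e.
`B i j = 1` iff rows `i` and columns `j` lie in the same block `⌊·/s⌋`. -/
noncomputable def frcMatrix (n s : ℕ) : Fin n → Fin n → ℝ :=
  fun i j => if (i : ℕ) / s = (j : ℕ) / s then 1 else 0

/-- The optimal decoding error of the submatrix of `B` formed by the columns
indexed by `S`:  `err(A_S) = min_{x ∈ ℝ^{|S|}} ‖A_S x − 1_n‖₂²`. -/
noncomputable def errSub {n : ℕ} (B : Fin n → Fin n → ℝ) (S : Finset (Fin n)) : ℝ :=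
  sInf {e : ℝ | ∃ x : Fin n → ℝ,
    e = ∑ i : Fin n, ((∑ j ∈ S, x j * B i j) - 1) ^ 2}

private lemma aux_lt_div (a b : ℕ) (h : 0 < b) : a < (a / b + 1) * b := by
  have h1 := Nat.div_add_mod a b
  have h2 := Nat.mod_lt a h
  have h3 : a / b * b = b * (a / b) := Nat.mul_comm _ _
  rw [add_mul, one_mul]
  omega

/-- Each block (fiber of `i ↦ i/s`) has exactly `s` rows. -/
private lemma fiber_card {k s n : ℕ} (hs : 0 < s) (hn : n = k * s) {t : ℕ} (ht : t < k) :
    (Finset.univ.filter (fun i : Fin n => (i : ℕ) / s = t)).card = s := by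
  have hbd : ∀ m : ℕ, m < s → t * s + m < n := by
    intro m hm
    have h2 : (t + 1) * s ≤ k * s := Nat.mul_le_mul_right s (by omega)
    rw [add_mul, one_mul] at h2
    omega
  have hcard : (Finset.univ.filter (fun i : Fin n => (i : ℕ) / s = t)).card
      = (Finset.range s).card := by
    refine Finset.card_bij (fun (i : Fin n) _ => (i : ℕ) - t * s) ?_ ?_ ?_
    · intro i hi
      simp only [Finset.mem_filter, Finset.mem_univ, true_and] at hi
      have h1 : t * s ≤ (i : ℕ) := by
        have := Nat.div_mul_le_self (i : ℕ) s
        rw [hi] at this; omega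
      have h2 : (i : ℕ) < (t + 1) * s := by
        have := aux_lt_div (i : ℕ) s hs
        rw [hi] at this; exact this
      simp only [Finset.mem_range]
      rw [add_mul, one_mul] at h2; omega
    · intro a ha b hb hab
      simp only [Finset.mem_filter, Finset.mem_univ, true_and] at ha hb
      have h1a : t * s ≤ (a : ℕ) := by
        have := Nat.div_mul_le_self (a : ℕ) s; rw [ha] at this; omega
      have h1b : t * s ≤ (b : ℕ) := by
        have := Nat.div_mul_le_self (b : ℕ) s; rw [hb] at this; omega
      apply Fin.ext; omega
    · intro m hm
      simp only [Finset.mem_range] at hm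
      refine ⟨⟨t * s + m, hbd m hm⟩, ?_, by simp⟩
      simp only [Finset.mem_filter, Finset.mem_univ, true_and]
      exact Nat.div_eq_of_lt_le (by omega) (by rw [add_mul, one_mul]; omega)
  rw [hcard, Finset.card_range]

/-- The optimal decoding error equals the number of rows in blocks containing
no selected column. -/
private lemma errSub_eq {k s n : ℕ} (hs : 0 < s) (hn : n = k * s) (S : Finset (Fin n)) :
    errSub (frcMatrix n s) S
      = ((Finset.univ.filter
          (fun i : Fin n => ∀ j ∈ S, (j : ℕ) / s ≠ (i : ℕ) / s)).card : ℝ) := by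
  set M := Finset.univ.filter
      (fun i : Fin n => ∀ j ∈ S, (j : ℕ) / s ≠ (i : ℕ) / s) with hM
  -- the witness
  set x : Fin n → ℝ :=
    fun j => ((S.filter (fun j' : Fin n => (j' : ℕ) / s = (j : ℕ) / s)).card : ℝ)⁻¹ with hx
  have hsum : ∀ y : Fin n → ℝ, ∀ i : Fin n,
      (∑ j ∈ S, y j * frcMatrix n s i j)
        = ∑ j ∈ S.filter (fun j : Fin n => (j : ℕ) / s = (i : ℕ) / s), y j := by
    intro y i
    rw [Finset.sum_filter]
    apply Finset.sum_congr rfl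
    intro j _
    simp only [frcMatrix, mul_ite, mul_one, mul_zero]
    by_cases h : (j : ℕ) / s = (i : ℕ) / s
    · rw [if_pos h, if_pos h.symm]
    · rw [if_neg h, if_neg (fun hh => h hh.symm)]
  have hwitness : (∑ i : Fin n, ((∑ j ∈ S, x j * frcMatrix n s i j) - 1) ^ 2)
      = (M.card : ℝ) := by
    have hterm : ∀ i : Fin n,
        ((∑ j ∈ S, x j * frcMatrix n s i j) - 1) ^ 2
          = if ∀ j ∈ S, (j : ℕ) / s ≠ (i : ℕ) / s then 1 else 0 := by
      intro i
      rw [hsum]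
      set T := S.filter (fun j : Fin n => (j : ℕ) / s = (i : ℕ) / s) with hT
      have hxT : ∀ j ∈ T, x j = ((T.card : ℝ))⁻¹ := by
        intro j hj
        have hjs : (j : ℕ) / s = (i : ℕ) / s := (Finset.mem_filter.mp hj).2
        have hTT : S.filter (fun j' : Fin n => (j' : ℕ) / s = (j : ℕ) / s) = T := by
          rw [hT]
          apply Finset.filter_congr
          intro j' _
          simp [hjs]
        simp only [hx, hTT]
      rw [Finset.sum_congr rfl hxT, Finset.sum_const, nsmul_eq_mul]
      by_cases hTe : T = ∅
      · have hcond : ∀ j ∈ S, (j : ℕ) / s ≠ (i : ℕ) / s := by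
          intro j hjS
          by_contra hc
          have : j ∈ T := Finset.mem_filter.mpr ⟨hjS, hc⟩
          simp [hTe] at this
        rw [if_pos hcond, hTe]
        norm_num
      · have hcond : ¬ ∀ j ∈ S, (j : ℕ) / s ≠ (i : ℕ) / s := by
          intro hc
          apply hTe
          rw [Finset.filter_eq_empty_iff]
          intro j hjS
          exact hc j hjS
        rw [if_neg hcond]
        have hc0 : (T.card : ℝ) ≠ 0 := by
          simp [Finset.card_eq_zero, hTe]
        rw [mul_inv_cancel₀ hc0]
        ring
    rw [Finset.sum_congr rfl (fun i _ => hterm i), Finset.sum_boole, hM]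
  have hlb : ∀ y : Fin n → ℝ,
      (M.card : ℝ) ≤ ∑ i : Fin n, ((∑ j ∈ S, y j * frcMatrix n s i j) - 1) ^ 2 := by
    intro y
    have h1 : ∀ i ∈ M, ((∑ j ∈ S, y j * frcMatrix n s i j) - 1) ^ 2 = 1 := by
      intro i hi
      have hmiss : ∀ j ∈ S, (j : ℕ) / s ≠ (i : ℕ) / s :=
        (Finset.mem_filter.mp hi).2
      have : (∑ j ∈ S, y j * frcMatrix n s i j) = 0 := by
        rw [hsum]
        have : S.filter (fun j : Fin n => (j : ℕ) / s = (i : ℕ) / s) = ∅ := by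
          rw [Finset.filter_eq_empty_iff]
          intro j hj
          exact hmiss j hj
        rw [this, Finset.sum_empty]
      rw [this]
      ring
    calc (M.card : ℝ) = ∑ i ∈ M, ((∑ j ∈ S, y j * frcMatrix n s i j) - 1) ^ 2 := by
          rw [Finset.sum_congr rfl h1, Finset.sum_const, nsmul_eq_mul, mul_one]
      _ ≤ ∑ i : Fin n, ((∑ j ∈ S, y j * frcMatrix n s i j) - 1) ^ 2 := by
          apply Finset.sum_le_sum_of_subset_of_nonneg (Finset.subset_univ M)
          intro i _ _
          positivity
  unfold errSub
  apply le_antisymm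
  · refine csInf_le ⟨(M.card : ℝ), ?_⟩ ⟨x, hwitness.symm⟩
    rintro e ⟨y, rfl⟩
    exact hlb y
  · refine le_csInf ⟨_, x, hwitness.symm⟩ ?_
    rintro e ⟨y, rfl⟩
    exact hlb y

theorem frc_expected_error_uniform_subset
    (k s n r : ℕ) (hk : 0 < k) (hs : 0 < s) (hn : n = k * s) (hr : r ≤ n) :
    (∑ S ∈ Finset.powersetCard r (Finset.univ : Finset (Fin n)),
        errSub (frcMatrix n s) S) / (n.choose r : ℝ)
    = (n : ℝ) * ((n - s).choose r : ℝ) / (n.choose r : ℝ) := by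
  -- rewrite each errSub as a natural number count
  have herr : ∀ S ∈ Finset.powersetCard r (Finset.univ : Finset (Fin n)),
      errSub (frcMatrix n s) S
        = ((Finset.univ.filter
            (fun i : Fin n => ∀ j ∈ S, (j : ℕ) / s ≠ (i : ℕ) / s)).card : ℝ) :=
    fun S _ => errSub_eq hs hn S
  rw [Finset.sum_congr rfl herr]
  -- count missed rows blockwise
  have hcount : ∀ S : Finset (Fin n),
      (Finset.univ.filter
          (fun i : Fin n => ∀ j ∈ S, (j : ℕ) / s ≠ (i : ℕ) / s)).card
        = ∑ t ∈ Finset.range k, if ∀ j ∈ S, (j : ℕ) / s ≠ t then s else 0 := by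
    intro S
    rw [Finset.card_eq_sum_card_fiberwise
      (f := fun i : Fin n => (i : ℕ) / s) (t := Finset.range k)
      (by
        intro i _
        simp only [Finset.mem_range]
        have h2 := aux_lt_div (i : ℕ) s hs
        have h3 : (i : ℕ) < k * s := by rw [← hn]; exact i.2
        by_contra hc
        replace hc : k ≤ (i : ℕ) / s := by simpa using hc
        have : k * s ≤ ((i : ℕ) / s) * s := Nat.mul_le_mul_right s hc
        have h4 : ((i : ℕ) / s) * s ≤ (i : ℕ) := Nat.div_mul_le_self _ _
        omega)]
    apply Finset.sum_congr rfl
    intro t ht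
    simp only [Finset.mem_range] at ht
    by_cases hmiss : ∀ j ∈ S, (j : ℕ) / s ≠ t
    · rw [if_pos hmiss]
      have : (Finset.univ.filter
            (fun i : Fin n => ∀ j ∈ S, (j : ℕ) / s ≠ (i : ℕ) / s)).filter
              (fun i : Fin n => (i : ℕ) / s = t)
          = Finset.univ.filter (fun i : Fin n => (i : ℕ) / s = t) := by
        ext i
        simp only [Finset.mem_filter, Finset.mem_univ, true_and]
        constructor
        · rintro ⟨_, h2⟩; exact h2
        · intro h2
          exact ⟨fun j hj => by rw [h2]; exact hmiss j hj, h2⟩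
      rw [this, fiber_card hs hn ht]
    · rw [if_neg hmiss]
      push_neg at hmiss
      obtain ⟨j0, hj0S, hj0⟩ := hmiss
      rw [Finset.card_eq_zero, Finset.filter_eq_empty_iff]
      intro i hi
      simp only [Finset.mem_filter, Finset.mem_univ, true_and] at hi
      intro hit
      exact hi j0 hj0S (by rw [hit]; exact hj0)
  -- assemble the numerator as a natural number
  have hnum : (∑ S ∈ Finset.powersetCard r (Finset.univ : Finset (Fin n)),
      (Finset.univ.filter
          (fun i : Fin n => ∀ j ∈ S, (j : ℕ) / s ≠ (i : ℕ) / s)).card)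
      = k * (s * (n - s).choose r) := by
    rw [Finset.sum_congr rfl (fun S _ => hcount S), Finset.sum_comm]
    have hinner : ∀ t ∈ Finset.range k,
        (∑ S ∈ Finset.powersetCard r (Finset.univ : Finset (Fin n)),
          if ∀ j ∈ S, (j : ℕ) / s ≠ t then s else 0)
          = s * (n - s).choose r := by
      intro t ht
      simp only [Finset.mem_range] at ht
      rw [← Finset.sum_filter]
      rw [Finset.sum_const, smul_eq_mul, mul_comm]
      congr 1
      have hfilter : (Finset.powersetCard r
            (Finset.univ : Finset (Fin n))).filter
              (fun S : Finset (Fin n) => ∀ j ∈ S, (j : ℕ) / s ≠ t)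
          = Finset.powersetCard r
              (Finset.univ.filter (fun j : Fin n => (j : ℕ) / s ≠ t)) := by
        ext S
        simp only [Finset.mem_filter, Finset.mem_powersetCard]
        constructor
        · rintro ⟨⟨_, hcard⟩, hall⟩
          exact ⟨fun j hj => Finset.mem_filter.mpr ⟨Finset.mem_univ j, hall j hj⟩, hcard⟩
        · rintro ⟨hsub, hcard⟩
          exact ⟨⟨Finset.subset_univ S, hcard⟩,
            fun j hj => (Finset.mem_filter.mp (hsub hj)).2⟩
      rw [hfilter, Finset.card_powersetCard]
      congr 1
      have hsplit := Finset.card_filter_add_card_filter_not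
        (s := (Finset.univ : Finset (Fin n)))
        (p := fun j : Fin n => (j : ℕ) / s = t)
      have hfc : (Finset.univ.filter (fun j : Fin n => (j : ℕ) / s = t)).card = s :=
        fiber_card hs hn ht
      have huniv : (Finset.univ : Finset (Fin n)).card = n := by simp
      simp only [ne_eq] at hsplit ⊢
      omega
    rw [Finset.sum_congr rfl hinner, Finset.sum_const, Finset.card_range, smul_eq_mul]
  rw [← Nat.cast_sum, hnum]
  rw [hn]
  push_cast
  ring
end

section
/- Let n = k·s and let B ∈ ℝ^{n×n} be the FRC encoding matrix. For any subset S ⊆ {1,…,n} with |S| ≥ n − s + 1, the all-ones vector 1_n lies in the column span of the submatrix A_S of B formed by the columns indexed by S; equivalently, err(A_S) := min over x of ‖A_S x − 1_n‖₂² = 0. That is, the FRC scheme is (s−1)-tolerant: the exact gradient is recoverable whenever at most s−1 workers straggle. -/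
/-!
STATEMENT 6 ((s−1)-tolerance of FRC).  For `n = k·s` and any column subset `S`
with `|S| ≥ n − s + 1` (i.e. at most `s − 1` stragglers), the all-ones vector
`1_n` lies in the span of the columns of the FRC matrix indexed by `S`;
equivalently `err(A_S) = 0`.
-/
theorem frc_tolerance
    (k s n : ℕ) (hk : 0 < k) (hs : 0 < s) (hn : n = k * s)
    (S : Finset (Fin n)) (hS : n - s + 1 ≤ S.card) :
    (∃ x : Fin n → ℝ, ∀ i : Fin n,
        (∑ j ∈ S, x j * frcMatrix n s i j) = 1) ∧
    errSub (frcMatrix n s) S = 0 := by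
  -- every block has a surviving column
  have hcover : ∀ i : Fin n,
      0 < (S.filter (fun j : Fin n => (j : ℕ) / s = (i : ℕ) / s)).card := by
    intro i
    by_contra h
    push_neg at h
    have hempty : (S.filter (fun j : Fin n => (j : ℕ) / s = (i : ℕ) / s)).card = 0 :=
      Nat.le_zero.mp h
    have hnoS : ∀ j ∈ S, ¬ ((j : ℕ) / s = (i : ℕ) / s) := by
      intro j hj hji
      have : j ∈ S.filter (fun j : Fin n => (j : ℕ) / s = (i : ℕ) / s) :=
        Finset.mem_filter.mpr ⟨hj, hji⟩
      simp [Finset.card_eq_zero.mp hempty] at this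
    set b := (i : ℕ) / s with hb
    have hbk : b < k := by
      have : (i : ℕ) < k * s := hn ▸ i.isLt
      exact Nat.div_lt_iff_lt_mul hs |>.mpr (by omega)
    -- the block of i sits inside the complement of S
    set T : Finset (Fin n) :=
      Finset.univ.filter (fun j : Fin n => (j : ℕ) / s = b) with hT
    have hsub : T ⊆ Finset.univ \ S := by
      intro j hj
      rw [hT, Finset.mem_filter] at hj
      refine Finset.mem_sdiff.mpr ⟨Finset.mem_univ _, fun hjS => ?_⟩
      exact hnoS j hjS hj.2
    have hcard : s ≤ T.card := by
      have hlt : ∀ m : Fin s, b * s + (m : ℕ) < n := by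
        intro m
        have h1 : b * s + (m : ℕ) < (b + 1) * s := by
          have := m.isLt; nlinarith
        have h2 : (b + 1) * s ≤ k * s := Nat.mul_le_mul_right s hbk
        omega
      have hinj : ∀ m : Fin s, (⟨b * s + m, hlt m⟩ : Fin n) ∈ T := by
        intro m
        rw [hT, Finset.mem_filter]
        refine ⟨Finset.mem_univ _, ?_⟩
        show (b * s + (m : ℕ)) / s = b
        rw [mul_comm, Nat.mul_add_div hs, Nat.div_eq_of_lt m.isLt]
        omega
      calc s = (Finset.univ : Finset (Fin s)).card := by simp
        _ ≤ T.card := by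
            refine Finset.card_le_card_of_injOn
              (fun m => (⟨b * s + m, hlt m⟩ : Fin n)) (fun m _ => hinj m) ?_
            intro m _ m' _ hmm
            have : b * s + (m : ℕ) = b * s + (m' : ℕ) := congrArg Fin.val hmm
            exact Fin.ext (by omega)
    have hTcard : T.card ≤ n - S.card := by
      have := Finset.card_le_card hsub
      simpa [Finset.card_sdiff_of_subset (Finset.subset_univ S)] using this
    have hSn : S.card ≤ n := by
      simpa using Finset.card_le_card (Finset.subset_univ S)
    omega
  -- the explicit coefficient vector
  set x : Fin n → ℝ := fun j =>
    (((S.filter (fun j' : Fin n => (j' : ℕ) / s = (j : ℕ) / s)).card : ℝ))⁻¹ with hx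
  have hsol : ∀ i : Fin n, (∑ j ∈ S, x j * frcMatrix n s i j) = 1 := by
    intro i
    have hrw : (∑ j ∈ S, x j * frcMatrix n s i j)
        = ∑ j ∈ S.filter (fun j : Fin n => (i : ℕ) / s = (j : ℕ) / s), x j := by
      rw [Finset.sum_filter]
      refine Finset.sum_congr rfl fun j _ => ?_
      by_cases h : (i : ℕ) / s = (j : ℕ) / s <;>
        simp [frcMatrix, h]
    rw [hrw]
    have hfe : S.filter (fun j : Fin n => (i : ℕ) / s = (j : ℕ) / s)
        = S.filter (fun j : Fin n => (j : ℕ) / s = (i : ℕ) / s) := by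
      apply Finset.filter_congr; intro j _; simp [eq_comm]
    rw [hfe]
    have hxval : ∀ j ∈ S.filter (fun j : Fin n => (j : ℕ) / s = (i : ℕ) / s),
        x j = (((S.filter (fun j' : Fin n => (j' : ℕ) / s = (i : ℕ) / s)).card : ℝ))⁻¹ := by
      intro j hj
      rw [Finset.mem_filter] at hj
      rw [hx]
      have heq : S.filter (fun j' : Fin n => (j' : ℕ) / s = (j : ℕ) / s)
          = S.filter (fun j' : Fin n => (j' : ℕ) / s = (i : ℕ) / s) := by
        apply Finset.filter_congr
        intro j' _
        simp [hj.2]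
      simp only [heq]
    rw [Finset.sum_congr rfl hxval, Finset.sum_const, nsmul_eq_mul]
    have hpos := hcover i
    field_simp
  refine ⟨⟨x, hsol⟩, ?_⟩
  unfold errSub
  have hmem : (0 : ℝ) ∈ {e : ℝ | ∃ x : Fin n → ℝ,
      e = ∑ i : Fin n, ((∑ j ∈ S, x j * frcMatrix n s i j) - 1) ^ 2} := by
    exact ⟨x, by simp [hsol]⟩
  have hlb : ∀ e ∈ {e : ℝ | ∃ x : Fin n → ℝ,
      e = ∑ i : Fin n, ((∑ j ∈ S, x j * frcMatrix n s i j) - 1) ^ 2}, (0 : ℝ) ≤ e := by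
    rintro e ⟨y, rfl⟩
    exact Finset.sum_nonneg fun i _ => sq_nonneg _
  exact le_antisymm (csInf_le ⟨0, hlb⟩ hmem) (le_csInf ⟨0, hmem⟩ hlb)
end

section
/- Let B ∈ ℝ^{n×n} be a circulant matrix, i.e., B(i,j) = c((i−j) mod n) for some vector c ∈ ℝ^n, so that each column of B is the cyclic shift by one position of the previous column. For v ∈ {0,1}^n, let A_v denote the submatrix of B formed by the columns j with v_j = 1, and let err(A_v) := min over x of ‖A_v x − 1_n‖₂². Let σ(v) denote the cyclic shift of v by one position. Then err(A_{σ(v)}) = err(A_v); consequently err(A_v) is constant on each cycle class (orbit of the cyclic-shift action) of {0,1}^n. -/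
/-- `err(A_v) = min_{x} ‖A_v x − 1_n‖₂²` where `A_v` is the submatrix of `B`
formed by the columns `j` with `v j = true`. -/
noncomputable def errCols {n : ℕ} (B : Fin n → Fin n → ℝ) (v : Fin n → Bool) : ℝ :=
  sInf {e : ℝ | ∃ x : Fin n → ℝ,
    e = ∑ i : Fin n,
      ((∑ j ∈ Finset.univ.filter (fun j => v j = true), x j * B i j) - 1) ^ 2}

/-- The cyclic shift by one position: `σ(v)_j = v_{j−1}` (indices mod `n`),
i.e. `(v_1, …, v_n) ↦ (v_n, v_1, …, v_{n−1})`. -/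
def cycShift (n : ℕ) [NeZero n] (v : Fin n → Bool) : Fin n → Bool :=
  fun j => v (j - 1)

/-- Key reindexing identity: for a circulant `B`, the objective value for the
shifted selector `cycShift n v` at coefficients `x` equals the objective value
for `v` at the shifted coefficients `fun j => x (j + 1)`. -/
lemma key_shift {n : ℕ} [NeZero n] (B : Fin n → Fin n → ℝ) (c : Fin n → ℝ)
    (hB : ∀ i j : Fin n, B i j = c (i - j)) (v : Fin n → Bool) (x : Fin n → ℝ) :
    (∑ i : Fin n,
      ((∑ j ∈ Finset.univ.filter (fun j => cycShift n v j = true), x j * B i j) - 1) ^ 2)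
    = ∑ i : Fin n,
      ((∑ j ∈ Finset.univ.filter (fun j => v j = true), x (j + 1) * B i j) - 1) ^ 2 := by
  have inner : ∀ i : Fin n,
      (∑ j ∈ Finset.univ.filter (fun j => cycShift n v j = true), x j * B i j)
      = ∑ j ∈ Finset.univ.filter (fun j => v j = true), x (j + 1) * B i (j + 1) := by
    intro i
    rw [Finset.sum_filter, Finset.sum_filter]
    exact Fintype.sum_equiv (Equiv.subRight (1 : Fin n))
      _ _ (fun j => by simp [cycShift, Equiv.subRight]; abel_nf)
  calc (∑ i : Fin n,
      ((∑ j ∈ Finset.univ.filter (fun j => cycShift n v j = true), x j * B i j) - 1) ^ 2)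
      = ∑ i : Fin n,
      ((∑ j ∈ Finset.univ.filter (fun j => v j = true), x (j + 1) * B (i + 1) (j + 1)) - 1) ^ 2 := by
        refine Fintype.sum_equiv (Equiv.subRight (1 : Fin n)) _ _ (fun i => ?_)
        rw [inner]
        simp [Equiv.subRight]
    _ = _ := by
        apply Finset.sum_congr rfl
        intro i _
        congr 1
        congr 1
        apply Finset.sum_congr rfl
        intro j _
        rw [hB, hB]
        congr 1
        abel

/-!
STATEMENT 7.  If `B` is circulant, i.e. `B i j = c (i − j)` (indices mod `n`),
so that each column of `B` is the cyclic shift by one of the previous column,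
then the optimal decoding error is invariant under cyclic shifts of the column
selector `v`; consequently `err(A_v)` is constant on each cycle class (orbit of
the cyclic-shift action) of `{0,1}^n`.
-/
theorem circulant_error_shift_invariant
    (n : ℕ) [NeZero n] (B : Fin n → Fin n → ℝ) (c : Fin n → ℝ)
    (hB : ∀ i j : Fin n, B i j = c (i - j)) (v : Fin n → Bool) :
    errCols B (cycShift n v) = errCols B v ∧
    ∀ k : ℕ, errCols B ((cycShift n)^[k] v) = errCols B v := by
  have main : ∀ w : Fin n → Bool, errCols B (cycShift n w) = errCols B w := by
    intro w
    unfold errCols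
    congr 1
    ext e
    constructor
    · rintro ⟨x, rfl⟩
      exact ⟨fun j => x (j + 1), key_shift B c hB w x⟩
    · rintro ⟨x, rfl⟩
      refine ⟨fun j => x (j - 1), ?_⟩
      rw [key_shift B c hB w (fun j => x (j - 1))]
      simp
  refine ⟨main v, ?_⟩
  intro k
  induction k with
  | zero => simp
  | succ k ih =>
      rw [Function.iterate_succ_apply', main, ih]
end

section
/- Let n, s, m be integers with 1 ≤ s ≤ n and 0 ≤ m ≤ n, and let p_ss, p_as ∈ [0,1]. Let B ∈ ℝ^{n×n} be a circulant matrix (each column the cyclic shift by one of the previous column) that is (s−1)-tolerant, meaning err(A_v) = 0 whenever the weight of v ∈ {0,1}^n is at least n−s+1, where A_v is the submatrix of B with columns at positions where v equals 1 and err(A) := min over x of ‖Ax − 1_n‖₂². Suppose m designated slow workers straggle independently with probability p_ss and the remaining n−m active workers straggle independently with probability p_as, and independently a uniformly random permutation shuffles the columns of B among the workers; let V ∈ {0,1}^n be the (random) non-straggler pattern of column indices. For each r ∈ {0,…,n}, partition the set of weight-r vectors in {0,1}^n into its cycle classes (orbits under cyclic shift), let {v_1,…,v_{N_r}} be any choice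 of one representative per cycle class and e_1,…,e_{N_r} the corresponding orbit sizes. Then E[err(A_V)] = Σ_{r=0}^{n−s} P_r · Σ_{i=1}^{N_r} (e_i / C(n,r)) · err(A_{v_i}), where P_r = Σ_{i=0}^{r} C(m,i) C(n−m, r−i) (1−p_ss)^i p_ss^{m−i} (1−p_as)^{r−i} p_as^{n−m−r+i}. -/
/-- Hamming weight of `v ∈ {0,1}^n`. -/
def hWeight {n : ℕ} (v : Fin n → Bool) : ℕ :=
  (Finset.univ.filter (fun j => v j = true)).card

/-- The cycle class (orbit under the cyclic-shift action) of `v`. -/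
def cycOrbit (n : ℕ) [NeZero n] (v : Fin n → Bool) : Finset (Fin n → Bool) :=
  (Finset.range n).image (fun k => (cycShift n)^[k] v)

section Aux

variable {n : ℕ} [NeZero n]

open Fin.NatCast Fin.CommRing

lemma shift_iter_apply (k : ℕ) (v : Fin n → Bool) (j : Fin n) :
    (cycShift n)^[k] v j = v (j - (k : Fin n)) := by
  induction k generalizing j with
  | zero => simp
  | succ k ih =>
    rw [Function.iterate_succ_apply']
    show ((cycShift n)^[k] v) (j - 1) = _
    rw [ih]
    congr 1
    push_cast
    ring

lemma shift_iter_n (v : Fin n → Bool) : (cycShift n)^[n] v = v := by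
  funext j
  rw [shift_iter_apply]
  simp

lemma shift_iter_mod (k : ℕ) (v : Fin n → Bool) :
    (cycShift n)^[k] v = (cycShift n)^[k % n] v := by
  conv_lhs => rw [← Nat.div_add_mod k n]
  have h : (cycShift n)^[n] = id := funext shift_iter_n
  rw [Function.iterate_add_apply, Function.iterate_mul, h, Function.iterate_id, id_eq]

lemma mem_cycOrbit_iff (v w : Fin n → Bool) :
    w ∈ cycOrbit n v ↔ ∃ k : ℕ, (cycShift n)^[k] v = w := by
  simp only [cycOrbit, Finset.mem_image, Finset.mem_range]
  constructor
  · rintro ⟨k, _, hk⟩; exact ⟨k, hk⟩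
  · rintro ⟨k, hk⟩
    exact ⟨k % n, Nat.mod_lt _ (Nat.pos_of_ne_zero (NeZero.ne n)), by
      rw [← shift_iter_mod]; exact hk⟩

lemma shift_iter_exists_inv (k : ℕ) (w a : Fin n → Bool)
    (h : (cycShift n)^[k] w = a) : ∃ k', (cycShift n)^[k'] a = w := by
  refine ⟨k * (n - 1), ?_⟩
  have hn : 1 ≤ n := Nat.one_le_iff_ne_zero.mpr (NeZero.ne n)
  have hkn : k * (n - 1) + k = n * k := by
    have : k * (n - 1) + k = k * ((n - 1) + 1) := (Nat.mul_succ k (n - 1)).symm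
    rw [this]
    have : n - 1 + 1 = n := by omega
    rw [this, Nat.mul_comm]
  have hid : (cycShift n)^[n] = id := funext shift_iter_n
  rw [← h, ← Function.iterate_add_apply, hkn, Function.iterate_mul, hid,
    Function.iterate_id, id_eq]

lemma hWeight_shift (v : Fin n → Bool) : hWeight (cycShift n v) = hWeight v := by
  unfold hWeight
  apply Finset.card_nbij' (fun j => j - 1) (fun j => j + 1)
  · intro j hj
    simp only [Finset.mem_coe, Finset.mem_filter, Finset.mem_univ, true_and] at hj ⊢
    exact hj
  · intro j hj
    simp only [Finset.mem_coe, Finset.mem_filter, Finset.mem_univ, true_and] at hj ⊢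
    show v (j + 1 - 1) = true
    simpa using hj
  · intro j _; simp
  · intro j _; simp

lemma hWeight_shift_iter (k : ℕ) (v : Fin n → Bool) :
    hWeight ((cycShift n)^[k] v) = hWeight v := by
  induction k with
  | zero => simp
  | succ k ih => rw [Function.iterate_succ_apply', hWeight_shift, ih]

lemma errCols_shift (B : Fin n → Fin n → ℝ) (c : Fin n → ℝ)
    (hB : ∀ i j, B i j = c (i - j)) (v : Fin n → Bool) :
    errCols B (cycShift n v) = errCols B v := by
  have KEY : ∀ x : Fin n → ℝ,
      (∑ i : Fin n, ((∑ j ∈ Finset.univ.filter (fun j => cycShift n v j = true),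
        x j * B i j) - 1) ^ 2)
      = ∑ i : Fin n, ((∑ j ∈ Finset.univ.filter (fun j => v j = true),
        x (j + 1) * B i j) - 1) ^ 2 := by
    intro x
    have inner : ∀ i : Fin n,
        (∑ j ∈ Finset.univ.filter (fun j => cycShift n v j = true), x j * B i j)
        = ∑ j ∈ Finset.univ.filter (fun j => v j = true), x (j + 1) * B (i - 1) j := by
      intro i
      apply Finset.sum_nbij' (fun j => j - 1) (fun j => j + 1)
      · intro a ha
        simp only [Finset.mem_coe, Finset.mem_filter, Finset.mem_univ, true_and, cycShift] at ha ⊢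
        exact (Finset.mem_filter.mp ha).2
      · intro a ha
        simp only [Finset.mem_coe, Finset.mem_filter, Finset.mem_univ, true_and, cycShift] at ha ⊢
        exact Finset.mem_filter.mpr ⟨Finset.mem_univ _, by simpa using ha⟩
      · intro a _; simp
      · intro a _; simp
      · intro a _
        have h1 : a - 1 + 1 = a := by ring
        rw [h1, hB, hB]
        have h2 : i - a = i - 1 - (a - 1) := by ring
        rw [h2]
    calc (∑ i : Fin n, ((∑ j ∈ Finset.univ.filter (fun j => cycShift n v j = true),
            x j * B i j) - 1) ^ 2)
        = ∑ i : Fin n, ((∑ j ∈ Finset.univ.filter (fun j => v j = true),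
            x (j + 1) * B (i - 1) j) - 1) ^ 2 := by
          exact Finset.sum_congr rfl (fun i _ => by rw [inner i])
      _ = ∑ i : Fin n, ((∑ j ∈ Finset.univ.filter (fun j => v j = true),
            x (j + 1) * B i j) - 1) ^ 2 := by
          exact Fintype.sum_equiv (Equiv.subRight (1 : Fin n)) _ _ (fun i => rfl)
  unfold errCols
  congr 1
  ext e
  simp only [Set.mem_setOf_eq]
  constructor
  · rintro ⟨x, rfl⟩
    exact ⟨fun j => x (j + 1), KEY x⟩
  · rintro ⟨x, rfl⟩
    refine ⟨fun j => x (j - 1), ?_⟩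
    rw [KEY (fun j => x (j - 1))]
    apply Finset.sum_congr rfl
    intro i _
    simp

lemma errCols_shift_iter (B : Fin n → Fin n → ℝ) (c : Fin n → ℝ)
    (hB : ∀ i j, B i j = c (i - j)) (k : ℕ) (v : Fin n → Bool) :
    errCols B ((cycShift n)^[k] v) = errCols B v := by
  induction k with
  | zero => simp
  | succ k ih => rw [Function.iterate_succ_apply', errCols_shift B c hB, ih]

end Aux

lemma exists_perm_comp {n : ℕ} (v w : Fin n → Bool) (h : hWeight v = hWeight w) :
    ∃ σ : Equiv.Perm (Fin n), ∀ j, v (σ j) = w j := by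
  have h1 : Fintype.card {j : Fin n // w j = true} = Fintype.card {j : Fin n // v j = true} := by
    rw [Fintype.card_subtype, Fintype.card_subtype]
    exact (h.symm : _)
  have h2 : Fintype.card {j : Fin n // ¬ (w j = true)} =
      Fintype.card {j : Fin n // ¬ (v j = true)} := by
    rw [Fintype.card_subtype_compl, Fintype.card_subtype_compl, h1]
  obtain ⟨e₁⟩ := Fintype.card_eq.mp h1
  obtain ⟨e₂⟩ := Fintype.card_eq.mp h2
  refine ⟨((Equiv.sumCompl (fun j => w j = true)).symm.trans
    ((Equiv.sumCongr e₁ e₂).trans (Equiv.sumCompl (fun j => v j = true)))), ?_⟩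
  intro j
  by_cases hw : w j = true
  · rw [Equiv.trans_apply, Equiv.trans_apply,
      Equiv.sumCompl_symm_apply_of_pos (p := fun j => w j = true) hw]
    rw [hw]
    simp only [Equiv.sumCongr_apply, Sum.map_inl, Equiv.sumCompl_apply_inl]
    exact (e₁ ⟨j, hw⟩).2
  · rw [Equiv.trans_apply, Equiv.trans_apply,
      Equiv.sumCompl_symm_apply_of_neg (p := fun j => w j = true) hw]
    have hw' : w j = false := by simpa using hw
    rw [hw']
    simp only [Equiv.sumCongr_apply, Sum.map_inr, Equiv.sumCompl_apply_inr]
    have := (e₂ ⟨j, hw⟩).2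
    simpa using this

lemma card_filter_lt_fin' {n m : ℕ} (hm : m ≤ n) (npos : 0 < n) :
    (Finset.univ.filter (fun i : Fin n => (i : ℕ) < m)).card = m := by
  have key : (Finset.univ.filter (fun i : Fin n => (i : ℕ) < m)).card
      = (Finset.range m).card := by
    refine Finset.card_nbij' (fun i => (i : ℕ))
      (fun k => (⟨k % n, Nat.mod_lt _ npos⟩ : Fin n)) ?_ ?_ ?_ ?_
    · intro a ha
      simp only [Finset.mem_coe, Finset.mem_filter, Finset.mem_univ, true_and] at ha
      simpa using ha
    · intro a ha
      simp only [Finset.mem_coe, Finset.mem_range] at ha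
      simp only [Finset.mem_coe, Finset.mem_filter, Finset.mem_univ, true_and]
      simpa [Nat.mod_eq_of_lt (by omega : a < n)] using ha
    · intro a ha
      simp only [Finset.mem_coe, Finset.mem_filter, Finset.mem_univ, true_and] at ha
      ext
      simp [Nat.mod_eq_of_lt (a.2)]
    · intro a ha
      simp only [Finset.mem_coe, Finset.mem_range] at ha
      simp [Nat.mod_eq_of_lt (by omega : a < n)]
  rw [key, Finset.card_range]

lemma card_weight_filter {n : ℕ} (r : ℕ) :
    (Finset.univ.filter (fun v : Fin n → Bool => hWeight v = r)).card = n.choose r := by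
  have key : (Finset.univ.filter (fun v : Fin n → Bool => hWeight v = r)).card
      = (Finset.powersetCard r (Finset.univ : Finset (Fin n))).card := by
    refine Finset.card_nbij' (fun v => Finset.univ.filter (fun j => v j = true))
      (fun T => (fun j => decide (j ∈ T))) ?_ ?_ ?_ ?_
    · intro v hv
      simp only [Finset.mem_coe, Finset.mem_filter, Finset.mem_univ, true_and] at hv
      simp only [Finset.mem_coe, Finset.mem_powersetCard]
      exact ⟨Finset.subset_univ _, hv⟩
    · intro T hT
      simp only [Finset.mem_coe, Finset.mem_powersetCard] at hT
      simp only [Finset.mem_coe, Finset.mem_filter, Finset.mem_univ, true_and]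
      rw [← hT.2]
      unfold hWeight
      congr 1
      ext j
      simp
    · intro v _
      funext j
      by_cases h : v j = true <;> simp [h]
    · intro T _
      ext j
      simp
  rw [key, Finset.card_powersetCard, Finset.card_fin]

open Polynomial in
lemma coeff_linear_pow (a b : ℝ) (mm i : ℕ) :
    ((C a * X + C b) ^ mm).coeff i = (mm.choose i : ℝ) * a ^ i * b ^ (mm - i) := by
  rw [add_pow, Polynomial.finset_sum_coeff]
  have hterm : ∀ k,
      ((C a * X) ^ k * C b ^ (mm - k) * ((mm.choose k : ℕ) : Polynomial ℝ)).coeff i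
      = ((mm.choose k : ℝ) * a ^ k * b ^ (mm - k)) * (if i = k then 1 else 0) := by
    intro k
    have h1 : (C a * X) ^ k * C b ^ (mm - k) * ((mm.choose k : ℕ) : Polynomial ℝ)
        = C ((mm.choose k : ℝ) * a ^ k * b ^ (mm - k)) * X ^ k := by
      rw [mul_pow, ← C_pow, ← C_pow, ← Polynomial.C_eq_natCast, C_mul, C_mul]
      ring
    rw [h1, Polynomial.coeff_C_mul, Polynomial.coeff_X_pow]
  rw [Finset.sum_congr rfl (fun k _ => hterm k)]
  calc ∑ k ∈ Finset.range (mm + 1),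
        ((mm.choose k : ℝ) * a ^ k * b ^ (mm - k)) * (if i = k then 1 else 0)
      = ((mm.choose i : ℝ) * a ^ i * b ^ (mm - i)) * (if i = i then 1 else 0) := by
        apply Finset.sum_eq_single i
        · intro b' _ hb'; simp [Ne.symm hb']
        · intro hi
          simp only [Finset.mem_range, not_lt] at hi
          have : mm.choose i = 0 := Nat.choose_eq_zero_of_lt (by omega)
          simp [this]
    _ = (mm.choose i : ℝ) * a ^ i * b ^ (mm - i) := by simp

open Polynomial in
lemma key_identity {n : ℕ} (m : ℕ) (hm : m ≤ n) (npos : 0 < n) (p_ss p_as : ℝ) (r : ℕ) :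
    ∑ T ∈ Finset.powersetCard r (Finset.univ : Finset (Fin n)),
      ((∏ i ∈ T, (1 - (if (i : ℕ) < m then p_ss else p_as))) *
        ∏ i ∈ Finset.univ \ T, (if (i : ℕ) < m then p_ss else p_as))
    = ∑ i ∈ Finset.range (r + 1),
        (m.choose i : ℝ) * ((n - m).choose (r - i) : ℝ) *
          (1 - p_ss) ^ i * p_ss ^ (m - i) *
          (1 - p_as) ^ (r - i) * p_as ^ (n - m - (r - i)) := by
  set p : Fin n → ℝ := fun i => if (i : ℕ) < m then p_ss else p_as with hp
  set Q : Polynomial ℝ :=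
    ∏ i : Fin n, (C (1 - p i) * X + C (p i)) with hQ
  have hcoeff1 : Q.coeff r
      = ∑ T ∈ Finset.powersetCard r (Finset.univ : Finset (Fin n)),
          ((∏ i ∈ T, (1 - p i)) * ∏ i ∈ Finset.univ \ T, p i) := by
    rw [hQ, Finset.prod_add, Polynomial.finset_sum_coeff]
    have hterm : ∀ T ∈ (Finset.univ : Finset (Fin n)).powerset,
        ((∏ i ∈ T, (C (1 - p i) * X)) * ∏ i ∈ Finset.univ \ T, C (p i)).coeff r
        = if T.card = r then ((∏ i ∈ T, (1 - p i)) * ∏ i ∈ Finset.univ \ T, p i) else 0 := by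
      intro T _
      have h1 : (∏ i ∈ T, (C (1 - p i) * X)) * ∏ i ∈ Finset.univ \ T, C (p i)
          = C ((∏ i ∈ T, (1 - p i)) * ∏ i ∈ Finset.univ \ T, p i) * X ^ T.card := by
        rw [Finset.prod_mul_distrib, Finset.prod_const, ← map_prod, ← map_prod, C_mul]
        ring
      rw [h1, Polynomial.coeff_C_mul, Polynomial.coeff_X_pow]
      by_cases h : T.card = r
      · simp [h]
      · simp [h, show ¬ (r = T.card) from fun hh => h hh.symm]
    rw [Finset.sum_congr rfl hterm, Finset.sum_ite, Finset.sum_const_zero, add_zero,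
      Finset.powersetCard_eq_filter]
  have hsplit : Q = (C (1 - p_ss) * X + C p_ss) ^ m * (C (1 - p_as) * X + C p_as) ^ (n - m) := by
    rw [hQ, ← Finset.prod_filter_mul_prod_filter_not Finset.univ (fun i : Fin n => (i : ℕ) < m)]
    congr 1
    · have he : ∀ i ∈ Finset.univ.filter (fun i : Fin n => (i : ℕ) < m),
          (C (1 - p i) * X + C (p i)) = (C (1 - p_ss) * X + C p_ss) := by
        intro i hi
        simp only [Finset.mem_filter, Finset.mem_univ, true_and] at hi
        simp [hp, hi]
      rw [Finset.prod_congr rfl he, Finset.prod_const, card_filter_lt_fin' hm npos]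
    · have he : ∀ i ∈ Finset.univ.filter (fun i : Fin n => ¬ ((i : ℕ) < m)),
          (C (1 - p i) * X + C (p i)) = (C (1 - p_as) * X + C p_as) := by
        intro i hi
        simp only [Finset.mem_filter, Finset.mem_univ, true_and] at hi
        simp [hp, hi]
      have hcard : (Finset.univ.filter (fun i : Fin n => ¬ ((i : ℕ) < m))).card = n - m := by
        have := Finset.card_filter_add_card_filter_not
          (s := (Finset.univ : Finset (Fin n))) (p := fun i : Fin n => (i : ℕ) < m)
        rw [card_filter_lt_fin' hm npos, Finset.card_univ, Fintype.card_fin] at this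
        omega
      rw [Finset.prod_congr rfl he, Finset.prod_const, hcard]
  have hcoeff2 : Q.coeff r
      = ∑ i ∈ Finset.range (r + 1),
          (m.choose i : ℝ) * ((n - m).choose (r - i) : ℝ) *
            (1 - p_ss) ^ i * p_ss ^ (m - i) *
            (1 - p_as) ^ (r - i) * p_as ^ (n - m - (r - i)) := by
    rw [hsplit, Polynomial.coeff_mul, Finset.Nat.sum_antidiagonal_eq_sum_range_succ_mk]
    apply Finset.sum_congr rfl
    intro i _
    rw [coeff_linear_pow, coeff_linear_pow]
    ring
  rw [← hcoeff1, hcoeff2]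

lemma hWeight_pattern {n : ℕ} (ω : Fin n → Bool) (π : Equiv.Perm (Fin n)) :
    hWeight (fun j => !ω (π.symm j)) = n - hWeight ω := by
  have hA : (Finset.univ.filter (fun j : Fin n => (!ω (π.symm j)) = true)).card
      = (Finset.univ.filter (fun i : Fin n => ω i = false)).card := by
    refine Finset.card_nbij' (fun j => π.symm j) (fun i => π i) ?_ ?_ ?_ ?_
    · intro a ha
      simp only [Finset.mem_coe, Finset.mem_filter, Finset.mem_univ, true_and, Bool.not_eq_true'] at ha ⊢
      exact ha
    · intro a ha
      simp only [Finset.mem_coe, Finset.mem_filter, Finset.mem_univ, true_and, Bool.not_eq_true'] at ha ⊢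
      simpa using ha
    · intro a _; simp
    · intro a _; simp
  have hB : (Finset.univ.filter (fun i : Fin n => ω i = false)).card = n - hWeight ω := by
    have h1 := Finset.card_filter_add_card_filter_not
      (s := (Finset.univ : Finset (Fin n))) (p := fun i : Fin n => ω i = true)
    have h2 : (Finset.univ.filter (fun i : Fin n => ¬ (ω i = true)))
        = Finset.univ.filter (fun i : Fin n => ω i = false) := by
      apply Finset.filter_congr
      intro i _
      simp
    rw [h2, Finset.card_univ, Fintype.card_fin] at h1
    have : (Finset.univ.filter (fun i : Fin n => ω i = true)).card = hWeight ω := rfl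
    omega
  show (Finset.univ.filter (fun j : Fin n => (!ω (π.symm j)) = true)).card = n - hWeight ω
  rw [hA, hB]

lemma perm_sum {n : ℕ} [NeZero n] (ω : Fin n → Bool) (f : (Fin n → Bool) → ℝ) :
    ∑ π : Equiv.Perm (Fin n), f (fun j => !ω (π.symm j))
    = ((n.factorial : ℝ) / (n.choose (n - hWeight ω) : ℝ)) *
        ∑ v ∈ Finset.univ.filter (fun v : Fin n → Bool => hWeight v = n - hWeight ω), f v := by
  classical
  set r := n - hWeight ω with hr
  set W := Finset.univ.filter (fun v : Fin n → Bool => hWeight v = r) with hW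
  set g : Equiv.Perm (Fin n) → (Fin n → Bool) := fun π => (fun j => !ω (π.symm j)) with hg
  have hmaps : ∀ π : Equiv.Perm (Fin n), π ∈ (Finset.univ : Finset (Equiv.Perm (Fin n))) →
      g π ∈ W := by
    intro π _
    simp only [hW, Finset.mem_filter, Finset.mem_univ, true_and]
    exact hWeight_pattern ω π
  set fib : (Fin n → Bool) → Finset (Equiv.Perm (Fin n)) :=
    fun v => Finset.univ.filter (fun π => g π = v) with hfibdef
  have hfib : ∀ v ∈ W, ∀ w ∈ W, (fib v).card = (fib w).card := by
    intro v hv w hw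
    simp only [hW, Finset.mem_filter, Finset.mem_univ, true_and] at hv hw
    obtain ⟨σ, hσ⟩ := exists_perm_comp v w (hv.trans hw.symm)
    refine Finset.card_nbij' (fun π => π.trans σ.symm) (fun π => π.trans σ) ?_ ?_ ?_ ?_
    · intro π hπ
      simp only [hfibdef, Finset.mem_coe, Finset.mem_filter, Finset.mem_univ, true_and] at hπ ⊢
      funext j
      have h1 : (π.trans σ.symm).symm j = π.symm (σ j) := by
        simp [Equiv.symm_trans_apply]
      show (!ω ((π.trans σ.symm).symm j)) = w j
      rw [h1, ← hσ j]
      exact congrFun hπ (σ j)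
    · intro π hπ
      simp only [hfibdef, Finset.mem_coe, Finset.mem_filter, Finset.mem_univ, true_and] at hπ ⊢
      funext j
      have h1 : (π.trans σ).symm j = π.symm (σ.symm j) := by
        simp [Equiv.symm_trans_apply]
      show (!ω ((π.trans σ).symm j)) = v j
      rw [h1]
      have := congrFun hπ (σ.symm j)
      simp only [hg] at this
      rw [this, ← hσ (σ.symm j)]
      simp
    · intro π _
      ext j
      simp
    · intro π _
      ext j
      simp
  have htot : ∑ w ∈ W, (fib w).card = n.factorial := by
    have h1 := Finset.card_eq_sum_card_fiberwise hmaps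
    rw [Finset.card_univ, Fintype.card_perm, Fintype.card_fin] at h1
    exact h1.symm
  have hWcard : W.card = n.choose r := card_weight_filter r
  have hrn : r ≤ n := by omega
  have hchoosepos : 0 < n.choose r := Nat.choose_pos hrn
  have hfibval : ∀ v ∈ W, ((fib v).card : ℝ)
      = (n.factorial : ℝ) / (n.choose r : ℝ) := by
    intro v hv
    have h1 : W.card * (fib v).card = n.factorial := by
      rw [← htot]
      rw [Finset.sum_congr rfl (fun w hw => hfib w hw v hv), Finset.sum_const,
        smul_eq_mul]
    rw [hWcard] at h1
    have h2 : ((n.choose r : ℕ) : ℝ) * ((fib v).card : ℝ) = (n.factorial : ℝ) := by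
      exact_mod_cast congrArg (fun x : ℕ => (x : ℝ)) h1
    have h3 : ((n.choose r : ℕ) : ℝ) ≠ 0 := by positivity
    field_simp
    linarith [h2]
  have hmain : ∑ π : Equiv.Perm (Fin n), f (g π) = ∑ v ∈ W, ((fib v).card : ℝ) * f v := by
    rw [← Finset.sum_fiberwise_of_maps_to hmaps (fun π => f (g π))]
    apply Finset.sum_congr rfl
    intro v hv
    have : ∀ π ∈ Finset.univ.filter (fun π : Equiv.Perm (Fin n) => g π = v),
        f (g π) = f v := by
      intro π hπ
      simp only [Finset.mem_filter, Finset.mem_univ, true_and] at hπ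
      rw [hπ]
    rw [Finset.sum_congr rfl this, Finset.sum_const, nsmul_eq_mul]
  rw [hmain, Finset.mul_sum]
  apply Finset.sum_congr rfl
  intro v hv
  rw [hfibval v hv]

theorem crc_expected_error_heterogeneous_shuffling
    (n s m : ℕ) [NeZero n] (hs1 : 1 ≤ s) (hsn : s ≤ n) (hm : m ≤ n)
    (p_ss p_as : ℝ)
    (hss0 : 0 ≤ p_ss) (hss1 : p_ss ≤ 1) (has0 : 0 ≤ p_as) (has1 : p_as ≤ 1)
    (B : Fin n → Fin n → ℝ) (c : Fin n → ℝ)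
    (hB : ∀ i j : Fin n, B i j = c (i - j))
    (htol : ∀ v : Fin n → Bool, n - s + 1 ≤ hWeight v → errCols B v = 0)
    (reps : ℕ → Finset (Fin n → Bool))
    (hwt : ∀ r, ∀ v ∈ reps r, hWeight v = r)
    (hdistinct : ∀ r, ∀ v ∈ reps r, ∀ w ∈ reps r,
      (∃ k : ℕ, (cycShift n)^[k] v = w) → v = w)
    (hcover : ∀ v : Fin n → Bool,
      ∃ w ∈ reps (hWeight v), ∃ k : ℕ, (cycShift n)^[k] w = v) :
    ∑ π : Equiv.Perm (Fin n), ∑ ω : Fin n → Bool,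
      ((n.factorial : ℝ)⁻¹ *
        ∏ i : Fin n,
          (if ω i then (if (i : ℕ) < m then p_ss else p_as)
           else 1 - (if (i : ℕ) < m then p_ss else p_as))) *
      errCols B (fun j => !ω (π.symm j))
    = ∑ r ∈ Finset.range (n - s + 1),
        (∑ i ∈ Finset.range (r + 1),
          (m.choose i : ℝ) * ((n - m).choose (r - i) : ℝ) *
            (1 - p_ss) ^ i * p_ss ^ (m - i) *
            (1 - p_as) ^ (r - i) * p_as ^ (n - m - (r - i))) *
        ∑ v ∈ reps r, (((cycOrbit n v).card : ℝ) / (n.choose r : ℝ)) *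
          errCols B v := by
  classical
  have npos : 0 < n := Nat.pos_of_ne_zero (NeZero.ne n)
  set p : Fin n → ℝ := fun i => if (i : ℕ) < m then p_ss else p_as with hp
  -- G r : normalized sum of errors over weight-r vectors
  set G : ℕ → ℝ := fun r => ((n.choose r : ℝ))⁻¹ *
    ∑ v ∈ Finset.univ.filter (fun v : Fin n → Bool => hWeight v = r), errCols B v with hG
  -- Step 1: swap sums and apply perm_sum
  have step1 :
      (∑ π : Equiv.Perm (Fin n), ∑ ω : Fin n → Bool,
        ((n.factorial : ℝ)⁻¹ * ∏ i : Fin n, (if ω i then p i else 1 - p i)) *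
          errCols B (fun j => !ω (π.symm j)))
      = ∑ ω : Fin n → Bool,
          (∏ i : Fin n, (if ω i then p i else 1 - p i)) * G (n - hWeight ω) := by
    rw [Finset.sum_comm]
    apply Finset.sum_congr rfl
    intro ω _
    have hfac : (0:ℝ) < (n.factorial : ℝ) := by positivity
    have hch : (0:ℝ) < ((n.choose (n - hWeight ω)) : ℝ) := by
      have : 0 < n.choose (n - hWeight ω) := Nat.choose_pos (by omega)
      positivity
    calc ∑ π : Equiv.Perm (Fin n),
          ((n.factorial : ℝ)⁻¹ * ∏ i : Fin n, (if ω i then p i else 1 - p i)) *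
            errCols B (fun j => !ω (π.symm j))
        = ((n.factorial : ℝ)⁻¹ * ∏ i : Fin n, (if ω i then p i else 1 - p i)) *
            ∑ π : Equiv.Perm (Fin n), errCols B (fun j => !ω (π.symm j)) := by
          rw [Finset.mul_sum]
      _ = ((n.factorial : ℝ)⁻¹ * ∏ i : Fin n, (if ω i then p i else 1 - p i)) *
            (((n.factorial : ℝ) / (n.choose (n - hWeight ω) : ℝ)) *
              ∑ v ∈ Finset.univ.filter
                (fun v : Fin n → Bool => hWeight v = n - hWeight ω), errCols B v) := by
          rw [perm_sum ω (errCols B)]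
      _ = (∏ i : Fin n, (if ω i then p i else 1 - p i)) * G (n - hWeight ω) := by
          rw [hG]
          field_simp
  rw [step1]
  -- Step 2: rewrite the sum over ω as a sum over subsets
  have step2 :
      (∑ ω : Fin n → Bool,
        (∏ i : Fin n, (if ω i then p i else 1 - p i)) * G (n - hWeight ω))
      = ∑ T ∈ (Finset.univ : Finset (Fin n)).powerset,
          ((∏ i ∈ T, (1 - p i)) * ∏ i ∈ Finset.univ \ T, p i) * G T.card := by
    refine Finset.sum_nbij' (fun ω => Finset.univ.filter (fun i => ω i = false))
      (fun T => (fun i => !decide (i ∈ T))) ?_ ?_ ?_ ?_ ?_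
    · intro ω _
      simp [Finset.mem_powerset]
    · intro T _
      simp
    · intro ω _
      funext i
      by_cases h : ω i = false
      · simp [h]
      · have h' : ω i = true := by simpa using h
        simp [h']
    · intro T _
      ext i
      simp
    · intro ω _
      have hcard : (Finset.univ.filter (fun i : Fin n => ω i = false)).card
          = n - hWeight ω := by
        have h1 := Finset.card_filter_add_card_filter_not
          (s := (Finset.univ : Finset (Fin n))) (p := fun i : Fin n => ω i = true)
        have h2 : (Finset.univ.filter (fun i : Fin n => ¬ (ω i = true)))
            = Finset.univ.filter (fun i : Fin n => ω i = false) := by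
          apply Finset.filter_congr
          intro i _
          simp
        rw [h2, Finset.card_univ, Fintype.card_fin] at h1
        have : (Finset.univ.filter (fun i : Fin n => ω i = true)).card = hWeight ω := rfl
        omega
      have hprod : (∏ i : Fin n, (if ω i then p i else 1 - p i))
          = (∏ i ∈ Finset.univ.filter (fun i => ω i = false), (1 - p i)) *
              ∏ i ∈ Finset.univ \ Finset.univ.filter (fun i => ω i = false), p i := by
        rw [← Finset.prod_filter_mul_prod_filter_not Finset.univ (fun i : Fin n => ω i = false)]
        congr 1
        · apply Finset.prod_congr rfl
          intro i hi
          simp only [Finset.mem_filter, Finset.mem_univ, true_and] at hi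
          simp [hi]
        · rw [← Finset.filter_not]
          apply Finset.prod_congr rfl
          intro i hi
          simp only [Finset.mem_filter, Finset.mem_univ, true_and] at hi
          have : ω i = true := by simpa using hi
          simp [this]
      rw [hprod, hcard]
  rw [step2]
  -- Step 3: group by cardinality
  have step3 :
      (∑ T ∈ (Finset.univ : Finset (Fin n)).powerset,
        ((∏ i ∈ T, (1 - p i)) * ∏ i ∈ Finset.univ \ T, p i) * G T.card)
      = ∑ r ∈ Finset.range (n + 1),
          (∑ T ∈ Finset.powersetCard r (Finset.univ : Finset (Fin n)),
            ((∏ i ∈ T, (1 - p i)) * ∏ i ∈ Finset.univ \ T, p i)) * G r := by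
    rw [Finset.sum_powerset]
    rw [Finset.card_univ, Fintype.card_fin]
    apply Finset.sum_congr rfl
    intro r _
    rw [Finset.sum_mul]
    apply Finset.sum_congr rfl
    intro T hT
    have : T.card = r := (Finset.mem_powersetCard.mp hT).2
    rw [this]
  rw [step3]
  -- Step 4: apply the key identity to each r
  have step4 :
      (∑ r ∈ Finset.range (n + 1),
        (∑ T ∈ Finset.powersetCard r (Finset.univ : Finset (Fin n)),
          ((∏ i ∈ T, (1 - p i)) * ∏ i ∈ Finset.univ \ T, p i)) * G r)
      = ∑ r ∈ Finset.range (n + 1),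
          (∑ i ∈ Finset.range (r + 1),
            (m.choose i : ℝ) * ((n - m).choose (r - i) : ℝ) *
              (1 - p_ss) ^ i * p_ss ^ (m - i) *
              (1 - p_as) ^ (r - i) * p_as ^ (n - m - (r - i))) * G r := by
    apply Finset.sum_congr rfl
    intro r _
    rw [key_identity m hm npos p_ss p_as r]
  rw [step4]
  -- Step 5: restrict the range using tolerance
  have hGzero : ∀ r, n - s + 1 ≤ r → G r = 0 := by
    intro r hrs
    have hGr : G r = ((n.choose r : ℝ))⁻¹ *
        ∑ v ∈ Finset.univ.filter (fun v : Fin n → Bool => hWeight v = r), errCols B v := rfl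
    rw [hGr]
    have : ∀ v ∈ Finset.univ.filter (fun v : Fin n → Bool => hWeight v = r),
        errCols B v = 0 := by
      intro v hv
      simp only [Finset.mem_filter, Finset.mem_univ, true_and] at hv
      exact htol v (by omega)
    rw [Finset.sum_congr rfl this, Finset.sum_const_zero, mul_zero]
  have step5 :
      (∑ r ∈ Finset.range (n + 1),
        (∑ i ∈ Finset.range (r + 1),
          (m.choose i : ℝ) * ((n - m).choose (r - i) : ℝ) *
            (1 - p_ss) ^ i * p_ss ^ (m - i) *
            (1 - p_as) ^ (r - i) * p_as ^ (n - m - (r - i))) * G r)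
      = ∑ r ∈ Finset.range (n - s + 1),
          (∑ i ∈ Finset.range (r + 1),
            (m.choose i : ℝ) * ((n - m).choose (r - i) : ℝ) *
              (1 - p_ss) ^ i * p_ss ^ (m - i) *
              (1 - p_as) ^ (r - i) * p_as ^ (n - m - (r - i))) * G r := by
    symm
    apply Finset.sum_subset
    · intro x hx
      simp only [Finset.mem_range] at hx ⊢
      omega
    · intro x _ hx
      simp only [Finset.mem_range, not_lt] at hx
      rw [hGzero x (by omega), mul_zero]
  rw [step5]
  -- Step 6: express G r via representatives
  apply Finset.sum_congr rfl
  intro r hr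
  simp only [Finset.mem_range] at hr
  congr 1
  -- G r = ∑ v ∈ reps r, (orbit card / choose) * err v
  have horb : ∑ v ∈ Finset.univ.filter (fun v : Fin n → Bool => hWeight v = r), errCols B v
      = ∑ v ∈ reps r, ((cycOrbit n v).card : ℝ) * errCols B v := by
    have hWeq : Finset.univ.filter (fun v : Fin n → Bool => hWeight v = r)
        = (reps r).biUnion (fun v => cycOrbit n v) := by
      ext w
      simp only [Finset.mem_filter, Finset.mem_univ, true_and, Finset.mem_biUnion]
      constructor
      · intro hw
        obtain ⟨v, hv, k, hk⟩ := hcover w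
        rw [hw] at hv
        exact ⟨v, hv, (mem_cycOrbit_iff v w).2 ⟨k, hk⟩⟩
      · rintro ⟨v, hv, hw⟩
        obtain ⟨k, hk⟩ := (mem_cycOrbit_iff v w).1 hw
        rw [← hk, hWeight_shift_iter, hwt r v hv]
    have hdisj : (↑(reps r) : Set (Fin n → Bool)).PairwiseDisjoint
        (fun v => cycOrbit n v) := by
      intro v hv w hw hvw
      simp only [Function.onFun]
      rw [Finset.disjoint_left]
      intro a hav haw
      exfalso
      apply hvw
      obtain ⟨k1, hk1⟩ := (mem_cycOrbit_iff v a).1 hav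
      obtain ⟨k2, hk2⟩ := (mem_cycOrbit_iff w a).1 haw
      obtain ⟨k', hk'⟩ := shift_iter_exists_inv k2 w a hk2
      apply hdistinct r v (Finset.mem_coe.mp hv) w (Finset.mem_coe.mp hw)
      refine ⟨k' + k1, ?_⟩
      rw [Function.iterate_add_apply, hk1, hk']
    rw [hWeq, Finset.sum_biUnion hdisj]
    apply Finset.sum_congr rfl
    intro v hv
    have hconst : ∀ w ∈ cycOrbit n v, errCols B w = errCols B v := by
      intro w hw
      obtain ⟨k, hk⟩ := (mem_cycOrbit_iff v w).1 hw
      rw [← hk, errCols_shift_iter B c hB]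
    rw [Finset.sum_congr rfl hconst, Finset.sum_const, nsmul_eq_mul]
  have hGr : G r = ((n.choose r : ℝ))⁻¹ *
      ∑ v ∈ Finset.univ.filter (fun v : Fin n → Bool => hWeight v = r), errCols B v := rfl
  rw [hGr, horb, Finset.mul_sum]
  apply Finset.sum_congr rfl
  intro v _
  rw [div_eq_mul_inv]
  ring
end

section
/- Let n = k·s and let B ∈ ℝ^{n×n} be the FRC encoding matrix. Suppose each of the n workers independently belongs to the slow class with probability p̂; slow workers straggle independently with probability p_ss and active workers with probability p_as; independently, a uniformly random permutation shuffles the columns of B among the workers; let S be the (random) set of column indices held by non-stragglers and err(A_S) := min over x of ‖A_S x − 1_n‖₂². Then E[err(A_S)] = Σ_{m=0}^{n} C(n,m) p̂^m (1−p̂)^{n−m} · E_err(FRC, n, m, s), where E_err(FRC, n, m, s) = n · Σ_{r=0}^{n−s} P_r(m) · C(n−s,r)/C(n,r) and P_r(m) = Σ_{i=0}^{r} C(m,i) C(n−m, r−i) (1−p_ss)^i p_ss^{m−i} (1−p_as)^{r−i} p_as^{n−m−r+i}. -/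
open Finset

lemma rows_sum {M : Type*} [AddCommMonoid M] (k s : ℕ) (hs : 0 < s) (g : ℕ → M) :
    ∑ i : Fin (k * s), g ((i : ℕ) / s) = ∑ b ∈ Finset.range k, s • g b := by
  rw [← (finProdFinEquiv (m := k) (n := s)).sum_comp (fun i : Fin (k*s) => g ((i:ℕ)/s))]
  have : ∀ p : Fin k × Fin s, g (((finProdFinEquiv p : Fin (k*s)) : ℕ) / s) = g p.1 := by
    intro p
    have : ((finProdFinEquiv p : Fin (k*s)) : ℕ) = p.2 + s * p.1 := rfl
    rw [this, Nat.add_mul_div_left _ _ hs, Nat.div_eq_of_lt p.2.2, zero_add]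
  simp only [this]
  rw [Fintype.sum_prod_type]
  simp only [Finset.sum_const, card_univ, Fintype.card_fin]
  exact Fin.sum_univ_eq_sum_range (fun b => s • g b) k

/-- the set of blocks not hit by `S` -/
def emptyB (n s k : ℕ) (S : Finset (Fin n)) : Finset ℕ :=
  (Finset.range k).filter (fun b => ∀ j ∈ S, (j : ℕ) / s ≠ b)

lemma errSub_frc (k s : ℕ) (hs : 0 < s) (S : Finset (Fin (k * s))) :
    errSub (frcMatrix (k * s) s) S = (s : ℝ) * ((emptyB (k * s) s k S).card) := by
  classical
  set EB := emptyB (k * s) s k S with hEB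
  have hdiv : ∀ i : Fin (k * s), (i : ℕ) / s < k := fun i =>
    Nat.div_lt_of_lt_mul (Nat.lt_of_lt_of_eq i.2 (mul_comm k s))
  have hmemEB : ∀ i : Fin (k * s),
      ((i : ℕ) / s ∈ EB ↔ S.filter (fun j : Fin (k*s) => (j : ℕ) / s = (i : ℕ) / s) = ∅) := by
    intro i
    simp only [hEB, emptyB, mem_filter, Finset.mem_range, hdiv i, true_and,
      Finset.filter_eq_empty_iff]
  have hrow : ∀ (x : Fin (k*s) → ℝ) (i : Fin (k*s)),
      ∑ j ∈ S, x j * frcMatrix (k*s) s i j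
        = ∑ j ∈ S.filter (fun j : Fin (k*s) => (j : ℕ) / s = (i : ℕ) / s), x j := by
    intro x i
    rw [Finset.sum_filter]
    refine Finset.sum_congr rfl fun j _ => ?_
    unfold frcMatrix
    by_cases h : (j : ℕ) / s = (i : ℕ) / s
    · simp [h]
    · have h2 : ¬ ((i : ℕ) / s = (j : ℕ) / s) := fun hh => h hh.symm
      simp [h, h2]
  have hcnt : ∑ i : Fin (k*s), (if (i : ℕ) / s ∈ EB then (1 : ℝ) else 0)
      = (s : ℝ) * EB.card := by
    rw [rows_sum k s hs (fun b => if b ∈ EB then (1:ℝ) else 0)]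
    simp only [nsmul_eq_mul]
    rw [← Finset.mul_sum, Finset.sum_ite_mem,
      Finset.inter_eq_right.2 (by rw [hEB]; exact Finset.filter_subset _ _),
      Finset.sum_const, nsmul_eq_mul, mul_one]
  set x₀ : Fin (k*s) → ℝ := fun j =>
    ((S.filter (fun j' : Fin (k*s) => (j' : ℕ) / s = (j : ℕ) / s)).card : ℝ)⁻¹ with hx₀
  have hwit : ∀ i : Fin (k*s),
      ((∑ j ∈ S, x₀ j * frcMatrix (k*s) s i j) - 1) ^ 2
        = (if (i : ℕ) / s ∈ EB then (1 : ℝ) else 0) := by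
    intro i
    rw [hrow]
    set F := S.filter (fun j : Fin (k*s) => (j : ℕ) / s = (i : ℕ) / s) with hF
    have hx : ∀ j ∈ F, x₀ j = ((F.card : ℝ))⁻¹ := by
      intro j hj
      have hj' : (j : ℕ) / s = (i : ℕ) / s := (Finset.mem_filter.1 hj).2
      have hfe : (S.filter (fun j' : Fin (k*s) => (j' : ℕ) / s = (j : ℕ) / s)) = F := by
        rw [hF]
        apply Finset.filter_congr
        intro j' _
        simp [hj']
      simp only [hx₀]
      rw [hfe]
    have hsum : ∑ j ∈ F, x₀ j = (F.card : ℝ) * (F.card : ℝ)⁻¹ := by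
      rw [Finset.sum_congr rfl hx, Finset.sum_const, nsmul_eq_mul]
    by_cases he : F = ∅
    · have hm : (i : ℕ) / s ∈ EB := (hmemEB i).2 (by rw [← hF]; exact he)
      rw [he, Finset.sum_empty, if_pos hm]
      norm_num
    · have hc : (0 : ℝ) < F.card := by
        have := Finset.card_pos.2 (Finset.nonempty_iff_ne_empty.2 he)
        exact_mod_cast this
      have hm : ¬ ((i : ℕ) / s ∈ EB) := by
        intro h
        exact he (by rw [hF]; exact (hmemEB i).1 h)
      rw [hsum, mul_inv_cancel₀ (ne_of_gt hc), if_neg hm]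
      norm_num
  have hval : ∑ i : Fin (k*s), ((∑ j ∈ S, x₀ j * frcMatrix (k*s) s i j) - 1) ^ 2
      = (s : ℝ) * EB.card := by
    rw [Finset.sum_congr rfl (fun i _ => hwit i)]
    exact hcnt
  have hlow : ∀ x : Fin (k*s) → ℝ,
      (s : ℝ) * EB.card ≤ ∑ i : Fin (k*s), ((∑ j ∈ S, x j * frcMatrix (k*s) s i j) - 1) ^ 2 := by
    intro x
    rw [← hcnt]
    refine Finset.sum_le_sum fun i _ => ?_
    by_cases hi : (i : ℕ) / s ∈ EB
    · rw [if_pos hi, hrow, (hmemEB i).1 hi, Finset.sum_empty]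
      norm_num
    · rw [if_neg hi]
      positivity
  unfold errSub
  apply le_antisymm
  · exact csInf_le ⟨(s : ℝ) * EB.card, fun e ⟨x, hx⟩ => hx ▸ hlow x⟩ ⟨x₀, hval.symm⟩
  · exact le_csInf ⟨_, x₀, hval.symm⟩ (fun e ⟨x, hx⟩ => hx ▸ hlow x)


lemma exists_perm_maps (n : ℕ) (F F' : Finset (Fin n)) (h : F.card = F'.card) :
    ∃ σ : Equiv.Perm (Fin n), ∀ w : Fin n, w ∈ F ↔ σ w ∈ F' := by
  classical
  have e₁ : {x : Fin n // x ∈ F} ≃ {x : Fin n // x ∈ F'} :=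
    Fintype.equivOfCardEq (by simp only [Fintype.card_coe, h])
  have e₂ : {x : Fin n // ¬ x ∈ F} ≃ {x : Fin n // ¬ x ∈ F'} :=
    Fintype.equivOfCardEq (by
      rw [Fintype.card_subtype_compl, Fintype.card_subtype_compl]
      simp only [Fintype.card_coe, h])
  refine ⟨Equiv.subtypeCongr e₁ e₂, fun w => ?_⟩
  by_cases hw : w ∈ F
  · simp only [Equiv.subtypeCongr, Equiv.trans_apply,
      Equiv.sumCompl_symm_apply_of_pos hw, Equiv.sumCongr_apply, Sum.map_inl,
      Equiv.sumCompl_apply_inl]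
    exact iff_of_true hw (e₁ ⟨w, hw⟩).2
  · simp only [Equiv.subtypeCongr, Equiv.trans_apply,
      Equiv.sumCompl_symm_apply_of_neg hw, Equiv.sumCongr_apply, Sum.map_inr,
      Equiv.sumCompl_apply_inr]
    exact iff_of_false hw (e₂ ⟨w, hw⟩).2

lemma count_avoid_congr (n : ℕ) (F F' B B' : Finset (Fin n)) (hF : F.card = F'.card)
    (hB : B.card = B'.card) :
    (Finset.univ.filter (fun π : Equiv.Perm (Fin n) => ∀ w ∈ F, π w ∉ B)).card
      = (Finset.univ.filter (fun π : Equiv.Perm (Fin n) => ∀ w ∈ F', π w ∉ B')).card := by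
  classical
  obtain ⟨σ, hσ⟩ := exists_perm_maps n F F' hF
  obtain ⟨τ, hτ⟩ := exists_perm_maps n B B' hB
  refine Finset.card_bij' (fun π _ => τ * π * σ⁻¹) (fun π _ => τ⁻¹ * π * σ) ?_ ?_ ?_ ?_
  · intro π hπ
    simp only [Finset.mem_filter, Finset.mem_univ, true_and] at hπ ⊢
    intro w hw
    have h1 : σ⁻¹ w ∈ F := by
      rw [hσ (σ⁻¹ w)]
      simpa using hw
    have h2 := hπ _ h1
    simp only [Equiv.Perm.mul_apply]
    exact fun hmem => h2 ((hτ _).2 hmem)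
  · intro π hπ
    simp only [Finset.mem_filter, Finset.mem_univ, true_and] at hπ ⊢
    intro w hw
    have h1 : σ w ∈ F' := (hσ w).1 hw
    have h2 := hπ _ h1
    simp only [Equiv.Perm.mul_apply]
    intro hmem
    exact h2 (by simpa using (hτ _).1 hmem)
  · intro π _; group
  · intro π _; group

lemma count_avoid_total (n r : ℕ) (B : Finset (Fin n)) :
    ∑ F ∈ (Finset.univ : Finset (Fin n)).powersetCard r,
      (Finset.univ.filter (fun π : Equiv.Perm (Fin n) => ∀ w ∈ F, π w ∉ B)).card
    = n.factorial * (n - B.card).choose r := by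
  classical
  have key : ∀ π : Equiv.Perm (Fin n),
      (Finset.univ.filter (fun w : Fin n => π w ∉ B)).card = n - B.card := by
    intro π
    have h1 : (Finset.univ.filter (fun w : Fin n => π w ∈ B)) = B.image π.symm := by
      ext w
      simp only [Finset.mem_filter, Finset.mem_univ, true_and, Finset.mem_image]
      constructor
      · intro hw; exact ⟨π w, hw, by simp⟩
      · rintro ⟨v, hv, rfl⟩; simpa using hv
    have h2 : (Finset.univ.filter (fun w : Fin n => π w ∈ B)).card = B.card := by
      rw [h1, Finset.card_image_of_injective _ π.symm.injective]
    have h3 := Finset.card_filter_add_card_filter_not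
      (s := (Finset.univ : Finset (Fin n))) (p := fun w => π w ∈ B)
    rw [Finset.card_univ, Fintype.card_fin] at h3
    omega
  simp only [Finset.card_filter]
  rw [Finset.sum_comm]
  have inner : ∀ π : Equiv.Perm (Fin n),
      ∑ F ∈ (Finset.univ : Finset (Fin n)).powersetCard r,
        (if (∀ w ∈ F, π w ∉ B) then (1:ℕ) else 0) = (n - B.card).choose r := by
    intro π
    rw [← Finset.card_filter]
    have heq : ((Finset.univ : Finset (Fin n)).powersetCard r).filter
          (fun F => ∀ w ∈ F, π w ∉ B)
        = (Finset.univ.filter (fun w : Fin n => π w ∉ B)).powersetCard r := by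
      ext F
      simp only [Finset.mem_filter, Finset.mem_powersetCard, Finset.subset_univ, true_and,
        Finset.subset_iff, Finset.mem_filter, Finset.mem_univ]
      tauto
    rw [heq, Finset.card_powersetCard, key π]
  rw [Finset.sum_congr rfl (fun π _ => inner π), Finset.sum_const, Finset.card_univ,
    Fintype.card_perm, Fintype.card_fin, smul_eq_mul]






lemma count_avoid_eq (n r : ℕ) (F B : Finset (Fin n)) (hF : F.card = r) :
    (n.choose r) * (Finset.univ.filter
        (fun π : Equiv.Perm (Fin n) => ∀ w ∈ F, π w ∉ B)).card
      = n.factorial * (n - B.card).choose r := by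
  classical
  have h := count_avoid_total n r B
  rw [Finset.sum_congr rfl (fun F' hF' => count_avoid_congr n F' F B B
    (((Finset.mem_powersetCard.1 hF').2).trans hF.symm) rfl)] at h
  rw [Finset.sum_const, Finset.card_powersetCard, Finset.card_univ, Fintype.card_fin,
    smul_eq_mul] at h
  exact h

lemma card_block (k s : ℕ) (hs : 0 < s) (b : ℕ) (hb : b < k) :
    ((Finset.univ : Finset (Fin (k*s))).filter (fun j : Fin (k*s) => (j : ℕ) / s = b)).card = s := by
  rw [Finset.card_filter]
  rw [rows_sum k s hs (fun b' => if b' = b then 1 else 0)]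
  have h : ∀ b' : ℕ, s • (if b' = b then (1:ℕ) else 0) = if b' = b then s else 0 := by
    intro b'; split <;> simp
  simp only [h]
  rw [Finset.sum_ite_eq' (Finset.range k) b (fun _ => s)]
  simp [hb]

lemma perm_sum_Z (k s : ℕ) (hs : 0 < s) (F : Finset (Fin (k*s))) :
    ((k*s).choose F.card) *
        ∑ π : Equiv.Perm (Fin (k*s)), (emptyB (k*s) s k (F.image (fun w => π w))).card
      = k * ((k*s).factorial * ((k*s - s).choose F.card)) := by
  classical
  have hz : ∀ π : Equiv.Perm (Fin (k*s)),
      (emptyB (k*s) s k (F.image (fun w => π w))).card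
        = ∑ b ∈ Finset.range k,
            (if (∀ w ∈ F, π w ∉ (Finset.univ.filter
                (fun j : Fin (k*s) => (j : ℕ) / s = b))) then 1 else 0) := by
    intro π
    rw [emptyB, Finset.card_filter]
    refine Finset.sum_congr rfl fun b _ => ?_
    refine if_congr ?_ rfl rfl
    constructor
    · intro h w hw
      simp only [Finset.mem_filter, Finset.mem_univ, true_and]
      exact h _ (Finset.mem_image_of_mem _ hw)
    · intro h j hj
      obtain ⟨w, hw, rfl⟩ := Finset.mem_image.1 hj
      have := h w hw
      simp only [Finset.mem_filter, Finset.mem_univ, true_and] at this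
      exact this
  rw [Finset.sum_congr rfl (fun π _ => hz π), Finset.sum_comm, Finset.mul_sum]
  have hstep : ∀ b ∈ Finset.range k,
      ((k*s).choose F.card) * (∑ π : Equiv.Perm (Fin (k*s)),
        if (∀ w ∈ F, π w ∉ (Finset.univ.filter
            (fun j : Fin (k*s) => (j : ℕ) / s = b))) then 1 else 0)
      = (k*s).factorial * ((k*s - s)).choose F.card := by
    intro b hb
    rw [← Finset.card_filter]
    have h := count_avoid_eq (k*s) F.card F
      (Finset.univ.filter (fun j : Fin (k*s) => (j : ℕ) / s = b)) rfl
    rwa [card_block k s hs b (Finset.mem_range.1 hb)] at h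
  rw [Finset.sum_congr rfl hstep, Finset.sum_const, Finset.card_range, smul_eq_mul]

lemma perm_avg (k s : ℕ) (hs : 0 < s) (F : Finset (Fin (k*s))) :
    (((k*s).factorial : ℝ))⁻¹ *
        ∑ π : Equiv.Perm (Fin (k*s)),
          ((s : ℝ) * ((emptyB (k*s) s k (F.image (fun w => π w))).card : ℝ))
      = (k*s : ℝ) * (((k*s - s)).choose F.card : ℝ) / (((k*s).choose F.card : ℝ)) := by
  have h := perm_sum_Z k s hs F
  have h' : (((k*s).choose F.card : ℝ)) *
      (∑ π : Equiv.Perm (Fin (k*s)),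
        ((emptyB (k*s) s k (F.image (fun w => π w))).card : ℝ))
      = (k : ℝ) * (((k*s).factorial : ℝ) * ((((k*s) - s)).choose F.card : ℝ)) := by
    exact_mod_cast h
  have hch : (((k*s).choose F.card : ℝ)) ≠ 0 := by
    have : 0 < (k*s).choose F.card :=
      Nat.choose_pos (by simpa using (Finset.card_le_univ F))
    positivity
  have hfac : (((k*s).factorial : ℝ)) ≠ 0 := by
    have := (k*s).factorial_pos
    positivity
  rw [← Finset.mul_sum]
  field_simp
  push_cast
  nlinarith [h']


lemma fiber_card_s10 {n : ℕ} (M : Finset (Fin n)) (r i : ℕ) (hi : i ≤ r) :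
    (((Finset.univ : Finset (Fin n)).powersetCard r).filter
        (fun F => (F ∩ M).card = i)).card
      = (M.card.choose i) * (((Finset.univ \ M).card).choose (r - i)) := by
  classical
  rw [← Finset.card_powersetCard i M,
    ← Finset.card_powersetCard (r - i) (Finset.univ \ M), ← Finset.card_product]
  refine Finset.card_bij' (fun F _ => (F ∩ M, F \ M)) (fun p _ => p.1 ∪ p.2) ?_ ?_ ?_ ?_
  · intro F hF
    simp only [Finset.mem_filter, Finset.mem_powersetCard] at hF
    obtain ⟨⟨_, hcard⟩, hint⟩ := hF
    simp only [Finset.mem_product, Finset.mem_powersetCard]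
    refine ⟨⟨Finset.inter_subset_right, hint⟩, ?_, ?_⟩
    · exact Finset.sdiff_subset_sdiff (Finset.subset_univ F) Finset.Subset.rfl
    · have := Finset.card_inter_add_card_sdiff F M
      omega
  · intro p hp
    simp only [Finset.mem_product, Finset.mem_powersetCard] at hp
    obtain ⟨⟨hp1, hc1⟩, hp2, hc2⟩ := hp
    have hdisj : Disjoint p.1 p.2 :=
      Finset.disjoint_of_subset_left hp1 (Finset.disjoint_of_subset_right hp2
        (Finset.disjoint_sdiff))
    simp only [Finset.mem_filter, Finset.mem_powersetCard]
    refine ⟨⟨Finset.subset_univ _, ?_⟩, ?_⟩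
    · rw [Finset.card_union_of_disjoint hdisj, hc1, hc2]; omega
    · have e1 : (p.1 ∪ p.2) ∩ M = p.1 := by
        ext a
        simp only [Finset.mem_inter, Finset.mem_union]
        constructor
        · rintro ⟨h | h, hM⟩
          · exact h
          · exact absurd hM (Finset.mem_sdiff.1 (hp2 h)).2
        · intro h; exact ⟨Or.inl h, hp1 h⟩
      rw [e1, hc1]
  · intro F hF
    ext a
    simp only [Finset.mem_union, Finset.mem_inter, Finset.mem_sdiff]
    constructor
    · rintro (⟨h, _⟩ | ⟨h, _⟩) <;> exact h
    · intro h
      by_cases hM : a ∈ M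
      · exact Or.inl ⟨h, hM⟩
      · exact Or.inr ⟨h, hM⟩
  · intro p hp
    simp only [Finset.mem_product, Finset.mem_powersetCard] at hp
    obtain ⟨⟨hp1, _⟩, hp2, _⟩ := hp
    have h1 : ∀ a ∈ p.1, a ∈ M := fun a ha => hp1 ha
    have h2 : ∀ a ∈ p.2, a ∉ M := fun a ha => (Finset.mem_sdiff.1 (hp2 ha)).2
    have e1 : (p.1 ∪ p.2) ∩ M = p.1 := by
      ext a
      simp only [Finset.mem_inter, Finset.mem_union]
      constructor
      · rintro ⟨h | h, hM⟩
        · exact h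
        · exact absurd hM (h2 a h)
      · intro h; exact ⟨Or.inl h, h1 a h⟩
    have e2 : (p.1 ∪ p.2) \ M = p.2 := by
      ext a
      simp only [Finset.mem_sdiff, Finset.mem_union]
      constructor
      · rintro ⟨h | h, hM⟩
        · exact absurd (h1 a h) hM
        · exact h
      · intro h; exact ⟨Or.inr h, h2 a h⟩
    exact Prod.ext e1 e2

lemma omega_slice {n : ℕ} (M : Finset (Fin n)) (p_ss p_as : ℝ) (r : ℕ) :
    ∑ F ∈ (Finset.univ : Finset (Fin n)).powersetCard r,
      ((∏ w ∈ F, (1 - (if w ∈ M then p_ss else p_as))) *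
        ∏ w ∈ Finset.univ \ F, (if w ∈ M then p_ss else p_as))
      = ∑ i ∈ Finset.range (r + 1),
          (M.card.choose i : ℝ) * ((n - M.card).choose (r - i) : ℝ) *
            (1 - p_ss) ^ i * p_ss ^ (M.card - i) *
            (1 - p_as) ^ (r - i) * p_as ^ (n - M.card - (r - i)) := by
  classical
  set m := M.card with hm
  have hcompl : (Finset.univ \ M).card = n - m := by
    rw [Finset.card_sdiff_of_subset (Finset.subset_univ M), Finset.card_univ, Fintype.card_fin]
  have hw : ∀ F ∈ (Finset.univ : Finset (Fin n)).powersetCard r,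
      (∏ w ∈ F, (1 - (if w ∈ M then p_ss else p_as))) *
        (∏ w ∈ Finset.univ \ F, (if w ∈ M then p_ss else p_as))
      = (1 - p_ss) ^ ((F ∩ M).card) * (1 - p_as) ^ (r - (F ∩ M).card) *
        (p_ss ^ (m - (F ∩ M).card) * p_as ^ (n - m - (r - (F ∩ M).card))) := by
    intro F hF
    have hFr : F.card = r := (Finset.mem_powersetCard.1 hF).2
    set e := (F ∩ M).card with he
    have hFsd : (F \ M).card = r - e := by
      have := Finset.card_inter_add_card_sdiff F M
      omega
    have hMF : (Finset.univ \ F) ∩ M = M \ F := by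
      ext a; simp only [Finset.mem_inter, Finset.mem_sdiff, Finset.mem_univ, true_and]; tauto
    have hMFc : (M \ F).card = m - e := by
      have := Finset.card_inter_add_card_sdiff M F
      rw [Finset.inter_comm] at this
      omega
    have hcc : (Finset.univ \ F) \ M = (Finset.univ \ M) \ F := by
      ext a; simp only [Finset.mem_sdiff, Finset.mem_univ, true_and]; tauto
    have hccc : ((Finset.univ \ M) \ F).card = n - m - (r - e) := by
      have h1 := Finset.card_inter_add_card_sdiff (Finset.univ \ M) F
      have h2 : (Finset.univ \ M) ∩ F = F \ M := by
        ext a; simp only [Finset.mem_inter, Finset.mem_sdiff, Finset.mem_univ, true_and]; tauto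
      rw [h2, hFsd, hcompl] at h1
      omega
    have p1 : (∏ w ∈ F, (1 - (if w ∈ M then p_ss else p_as)))
        = (1 - p_ss) ^ e * (1 - p_as) ^ (r - e) := by
      rw [← Finset.prod_filter_mul_prod_filter_not F (fun w => w ∈ M)]
      rw [Finset.filter_mem_eq_inter, ← Finset.sdiff_eq_filter]
      have q1 : ∏ w ∈ F ∩ M, (1 - (if w ∈ M then p_ss else p_as))
          = ∏ _w ∈ F ∩ M, (1 - p_ss) :=
        Finset.prod_congr rfl (fun w hw => by rw [if_pos (Finset.mem_inter.1 hw).2])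
      have q2 : ∏ w ∈ F \ M, (1 - (if w ∈ M then p_ss else p_as))
          = ∏ _w ∈ F \ M, (1 - p_as) :=
        Finset.prod_congr rfl (fun w hw => by rw [if_neg (Finset.mem_sdiff.1 hw).2])
      rw [q1, q2, Finset.prod_const, Finset.prod_const, hFsd]
    have p2 : (∏ w ∈ Finset.univ \ F, (if w ∈ M then p_ss else p_as))
        = p_ss ^ (m - e) * p_as ^ (n - m - (r - e)) := by
      rw [← Finset.prod_filter_mul_prod_filter_not (Finset.univ \ F) (fun w => w ∈ M)]
      rw [Finset.filter_mem_eq_inter, ← Finset.sdiff_eq_filter, hMF, hcc]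
      have q1 : ∏ w ∈ M \ F, (if w ∈ M then p_ss else p_as) = ∏ _w ∈ M \ F, p_ss :=
        Finset.prod_congr rfl (fun w hw => by rw [if_pos (Finset.mem_sdiff.1 hw).1])
      have q2 : ∏ w ∈ (Finset.univ \ M) \ F, (if w ∈ M then p_ss else p_as)
          = ∏ _w ∈ (Finset.univ \ M) \ F, p_as :=
        Finset.prod_congr rfl (fun w hw =>
          by rw [if_neg (Finset.mem_sdiff.1 (Finset.mem_sdiff.1 hw).1).2])
      rw [q1, q2, Finset.prod_const, Finset.prod_const, hMFc, hccc]
    rw [p1, p2]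
  rw [Finset.sum_congr rfl hw]
  rw [← Finset.sum_fiberwise_of_maps_to (g := fun F => (F ∩ M).card)
    (t := Finset.range (r + 1)) (fun F hF => Finset.mem_range.2 (Nat.lt_succ_of_le
      (le_trans (Finset.card_le_card Finset.inter_subset_left)
        (le_of_eq (Finset.mem_powersetCard.1 hF).2))))]
  refine Finset.sum_congr rfl fun i hi => ?_
  have hir : i ≤ r := Nat.lt_succ_iff.1 (Finset.mem_range.1 hi)
  have hcongr :
      ∑ F ∈ ((Finset.univ : Finset (Fin n)).powersetCard r).filter
          (fun F => (F ∩ M).card = i),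
        (1 - p_ss) ^ ((F ∩ M).card) * (1 - p_as) ^ (r - (F ∩ M).card) *
          (p_ss ^ (m - (F ∩ M).card) * p_as ^ (n - m - (r - (F ∩ M).card)))
      = ∑ F ∈ ((Finset.univ : Finset (Fin n)).powersetCard r).filter
          (fun F => (F ∩ M).card = i),
        (1 - p_ss) ^ i * (1 - p_as) ^ (r - i) *
          (p_ss ^ (m - i) * p_as ^ (n - m - (r - i))) :=
    Finset.sum_congr rfl (fun F hF => by rw [(Finset.mem_filter.1 hF).2])
  rw [hcongr, Finset.sum_const, fiber_card_s10 M r i hir, hcompl, nsmul_eq_mul]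
  push_cast
  ring


def finsetEquiv (n : ℕ) (b : Bool) : (Fin n → Bool) ≃ Finset (Fin n) where
  toFun f := Finset.univ.filter (fun i => f i = b)
  invFun M := fun i => if i ∈ M then b else !b
  left_inv f := by
    funext i
    by_cases h : f i = b
    · simp [h]
    · have h2 : f i = !b := by cases hb : f i <;> cases b <;> simp_all
      simp [h, h2]
  right_inv M := by
    ext i
    by_cases h : i ∈ M <;> simp [h]

lemma omega_weight {n : ℕ} (c ω : Fin n → Bool) (p_ss p_as : ℝ) :
    (∏ i : Fin n, (if ω i then (if c i then p_ss else p_as)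
        else 1 - (if c i then p_ss else p_as)))
      = (∏ w ∈ Finset.univ.filter (fun i => ω i = false),
          (1 - (if w ∈ Finset.univ.filter (fun i : Fin n => c i = true)
            then p_ss else p_as))) *
        (∏ w ∈ Finset.univ \ Finset.univ.filter (fun i => ω i = false),
          (if w ∈ Finset.univ.filter (fun i : Fin n => c i = true)
            then p_ss else p_as)) := by
  rw [← Finset.prod_filter_mul_prod_filter_not Finset.univ (fun i => ω i = false)]
  have hset : Finset.univ.filter (fun i : Fin n => ¬ (ω i = false))
      = Finset.univ \ Finset.univ.filter (fun i => ω i = false) := by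
    ext a; simp
  rw [← hset]
  congr 1
  · refine Finset.prod_congr rfl fun w hw => ?_
    have h1 : ω w = false := (Finset.mem_filter.1 hw).2
    by_cases h2 : c w <;> simp [h1, h2]
  · refine Finset.prod_congr rfl fun w hw => ?_
    have h1 : ω w = true := by
      have := (Finset.mem_filter.1 hw).2
      simpa using this
    by_cases h2 : c w <;> simp [h1, h2]

lemma c_weight {n : ℕ} (c : Fin n → Bool) (phat : ℝ) :
    (∏ i : Fin n, (if c i then phat else 1 - phat))
      = phat ^ (Finset.univ.filter (fun i : Fin n => c i = true)).card *
        (1 - phat) ^ (n - (Finset.univ.filter (fun i : Fin n => c i = true)).card) := by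
  rw [← Finset.prod_filter_mul_prod_filter_not Finset.univ (fun i => c i = true)]
  have h1 : ∏ w ∈ Finset.univ.filter (fun i : Fin n => c i = true),
      (if c w then phat else 1 - phat)
      = ∏ _w ∈ Finset.univ.filter (fun i : Fin n => c i = true), phat :=
    Finset.prod_congr rfl fun w hw => by
      have := (Finset.mem_filter.1 hw).2; simp [this]
  have h2 : ∏ w ∈ Finset.univ.filter (fun i : Fin n => ¬ (c i = true)),
      (if c w then phat else 1 - phat)
      = ∏ _w ∈ Finset.univ.filter (fun i : Fin n => ¬ (c i = true)), (1 - phat) :=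
    Finset.prod_congr rfl fun w hw => by
      have := (Finset.mem_filter.1 hw).2; simp [this]
  have h3 : (Finset.univ.filter (fun i : Fin n => ¬ (c i = true))).card
      = n - (Finset.univ.filter (fun i : Fin n => c i = true)).card := by
    have := Finset.card_filter_add_card_filter_not
      (s := (Finset.univ : Finset (Fin n))) (p := fun i => c i = true)
    rw [Finset.card_univ, Fintype.card_fin] at this
    omega
  rw [h1, h2, Finset.prod_const, Finset.prod_const, h3]

noncomputable def Rval (n s r : ℕ) : ℝ := (n : ℝ) * ((n - s).choose r : ℝ) / (n.choose r : ℝ)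

noncomputable def Pterm (n : ℕ) (p_ss p_as : ℝ) (m r : ℕ) : ℝ :=
  ∑ i ∈ Finset.range (r + 1),
    (m.choose i : ℝ) * ((n - m).choose (r - i) : ℝ) *
      (1 - p_ss) ^ i * p_ss ^ (m - i) *
      (1 - p_as) ^ (r - i) * p_as ^ (n - m - (r - i))

lemma omega_slice_P {n : ℕ} (M : Finset (Fin n)) (p_ss p_as : ℝ) (r : ℕ) :
    ∑ F ∈ (Finset.univ : Finset (Fin n)).powersetCard r,
      ((∏ w ∈ F, (1 - (if w ∈ M then p_ss else p_as))) *
        ∏ w ∈ Finset.univ \ F, (if w ∈ M then p_ss else p_as))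
      = Pterm n p_ss p_as M.card r := by
  unfold Pterm
  exact omega_slice M p_ss p_as r

lemma perm_avg_R (k s : ℕ) (hs : 0 < s) (F : Finset (Fin (k*s))) :
    (((k*s).factorial : ℝ))⁻¹ *
        ∑ π : Equiv.Perm (Fin (k*s)),
          ((s : ℝ) * ((emptyB (k*s) s k (F.image (fun w => π w))).card : ℝ))
      = Rval (k*s) s F.card := by
  rw [perm_avg k s hs F]
  unfold Rval
  push_cast
  ring


/-!
STATEMENT 10 (Theorem 1 combined with the remark: averaging over the random
class assignment).  Each of the `n` workers independently belongs to the slow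
class with probability `p̂` (`c i = true` means worker `i` is slow); slow
workers straggle independently with probability `p_ss`, active workers with
probability `p_as` (`ω i = true` means worker `i` straggles); independently a
uniformly random permutation `π` shuffles the columns of the FRC matrix among
the workers (worker `w` holds column `π w`).  `S` is the set of columns held by
non-stragglers.  Then
`E[err(A_S)] = Σ_{m=0}^{n} C(n,m) p̂^m (1−p̂)^{n−m} · E_err(FRC,n,m,s)` with
`E_err(FRC,n,m,s) = n Σ_{r=0}^{n−s} P_r(m) C(n−s,r)/C(n,r)`.
-/
theorem frc_expected_error_random_classes
    (k s n : ℕ) (hk : 0 < k) (hs : 0 < s) (hn : n = k * s)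
    (phat p_ss p_as : ℝ) (hp0 : 0 ≤ phat) (hp1 : phat ≤ 1)
    (hss0 : 0 ≤ p_ss) (hss1 : p_ss ≤ 1) (has0 : 0 ≤ p_as) (has1 : p_as ≤ 1) :
    ∑ c : Fin n → Bool, ∑ π : Equiv.Perm (Fin n), ∑ ω : Fin n → Bool,
      ((∏ i : Fin n, (if c i then phat else 1 - phat)) *
        (n.factorial : ℝ)⁻¹ *
        (∏ i : Fin n,
          (if ω i then (if c i then p_ss else p_as)
           else 1 - (if c i then p_ss else p_as)))) *
      errSub (frcMatrix n s)
        ((Finset.univ.filter (fun w : Fin n => ω w = false)).image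
          (fun w => π w))
    = ∑ m ∈ Finset.range (n + 1),
        (n.choose m : ℝ) * phat ^ m * (1 - phat) ^ (n - m) *
        ((n : ℝ) * ∑ r ∈ Finset.range (n - s + 1),
          (∑ i ∈ Finset.range (r + 1),
            (m.choose i : ℝ) * ((n - m).choose (r - i) : ℝ) *
              (1 - p_ss) ^ i * p_ss ^ (m - i) *
              (1 - p_as) ^ (r - i) * p_as ^ (n - m - (r - i))) *
          ((n - s).choose r : ℝ) / (n.choose r : ℝ)) := by
  classical
  subst hn
  simp only [errSub_frc k s hs]
  -- per class assignment c
  have main_c : ∀ c : Fin (k*s) → Bool,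
      (∑ π : Equiv.Perm (Fin (k*s)), ∑ ω : Fin (k*s) → Bool,
        ((∏ i : Fin (k*s), (if c i then phat else 1 - phat)) *
          ((k*s).factorial : ℝ)⁻¹ *
          (∏ i : Fin (k*s),
            (if ω i then (if c i then p_ss else p_as)
             else 1 - (if c i then p_ss else p_as)))) *
        ((s : ℝ) * ((emptyB (k*s) s k
          ((Finset.univ.filter (fun w : Fin (k*s) => ω w = false)).image
            (fun w => π w))).card : ℝ)))
      = (∏ i : Fin (k*s), (if c i then phat else 1 - phat)) *
          ∑ r ∈ Finset.range (k*s - s + 1),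
            Pterm (k*s) p_ss p_as
              ((Finset.univ.filter (fun i : Fin (k*s) => c i = true)).card) r *
            Rval (k*s) s r := by
    intro c
    set A := ∏ i : Fin (k*s), (if c i then phat else 1 - phat) with hA
    set M := Finset.univ.filter (fun i : Fin (k*s) => c i = true) with hMdef
    rw [Finset.sum_comm]
    -- per straggler pattern ω : average over π
    have step1 : ∀ ω : Fin (k*s) → Bool,
        ∑ π : Equiv.Perm (Fin (k*s)),
          (A * ((k*s).factorial : ℝ)⁻¹ *
            (∏ i : Fin (k*s),
              (if ω i then (if c i then p_ss else p_as)
               else 1 - (if c i then p_ss else p_as)))) *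
          ((s : ℝ) * ((emptyB (k*s) s k
            ((Finset.univ.filter (fun w : Fin (k*s) => ω w = false)).image
              (fun w => π w))).card : ℝ))
        = (A * (∏ i : Fin (k*s),
              (if ω i then (if c i then p_ss else p_as)
               else 1 - (if c i then p_ss else p_as)))) *
            Rval (k*s) s
              ((Finset.univ.filter (fun w : Fin (k*s) => ω w = false)).card) := by
      intro ω
      rw [← perm_avg_R k s hs (Finset.univ.filter (fun w : Fin (k*s) => ω w = false))]
      rw [Finset.mul_sum, ← Finset.sum_congr rfl (fun (π : Equiv.Perm (Fin (k*s))) _ => rfl)]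
      rw [Finset.mul_sum]
      exact Finset.sum_congr rfl fun π _ => by ring
    rw [Finset.sum_congr rfl fun ω _ => step1 ω]
    -- rewrite the ω-weight via the subset F
    have step2 : ∀ ω : Fin (k*s) → Bool,
        (A * (∏ i : Fin (k*s),
            (if ω i then (if c i then p_ss else p_as)
             else 1 - (if c i then p_ss else p_as)))) *
          Rval (k*s) s
            ((Finset.univ.filter (fun w : Fin (k*s) => ω w = false)).card)
        = (fun F : Finset (Fin (k*s)) =>
            (A * ((∏ w ∈ F, (1 - (if w ∈ M then p_ss else p_as))) *
              ∏ w ∈ Finset.univ \ F, (if w ∈ M then p_ss else p_as))) *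
            Rval (k*s) s F.card) (finsetEquiv (k*s) false ω) := by
      intro ω
      simp only [finsetEquiv, Equiv.coe_fn_mk]
      rw [omega_weight c ω p_ss p_as]
    rw [Fintype.sum_equiv (finsetEquiv (k*s) false) _
      (fun F : Finset (Fin (k*s)) =>
        (A * ((∏ w ∈ F, (1 - (if w ∈ M then p_ss else p_as))) *
          ∏ w ∈ Finset.univ \ F, (if w ∈ M then p_ss else p_as))) *
        Rval (k*s) s F.card) step2]
    -- pull A out
    have step3 : ∑ F : Finset (Fin (k*s)),
        (A * ((∏ w ∈ F, (1 - (if w ∈ M then p_ss else p_as))) *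
          ∏ w ∈ Finset.univ \ F, (if w ∈ M then p_ss else p_as))) *
        Rval (k*s) s F.card
        = A * ∑ F : Finset (Fin (k*s)),
            ((∏ w ∈ F, (1 - (if w ∈ M then p_ss else p_as))) *
              ∏ w ∈ Finset.univ \ F, (if w ∈ M then p_ss else p_as)) *
            Rval (k*s) s F.card := by
      rw [Finset.mul_sum]
      exact Finset.sum_congr rfl fun F _ => by ring
    rw [step3]
    congr 1
    -- group subsets by size
    rw [← Finset.powerset_univ, Finset.sum_powerset]
    rw [Finset.card_univ, Fintype.card_fin]
    have step4 : ∀ r ∈ Finset.range (k*s + 1),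
        ∑ F ∈ (Finset.univ : Finset (Fin (k*s))).powersetCard r,
          ((∏ w ∈ F, (1 - (if w ∈ M then p_ss else p_as))) *
            ∏ w ∈ Finset.univ \ F, (if w ∈ M then p_ss else p_as)) *
          Rval (k*s) s F.card
        = Pterm (k*s) p_ss p_as M.card r * Rval (k*s) s r := by
      intro r _
      rw [← omega_slice_P M p_ss p_as r, Finset.sum_mul]
      exact Finset.sum_congr rfl fun F hF => by
        rw [(Finset.mem_powersetCard.1 hF).2]
    rw [Finset.sum_congr rfl step4]
    -- truncate the range
    refine (Finset.sum_subset ?_ ?_).symm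
    · exact Finset.range_subset_range.2 (by omega)
    · intro r _ hr
      have hlt : k*s - s < r := by
        simp only [Finset.mem_range, not_lt] at hr
        omega
      have : (k*s - s).choose r = 0 := Nat.choose_eq_zero_of_lt hlt
      unfold Rval
      rw [this]
      push_cast
      ring
  rw [Finset.sum_congr rfl fun c _ => main_c c]
  -- now sum over c, via subsets M
  have stepc : ∀ c : Fin (k*s) → Bool,
      (∏ i : Fin (k*s), (if c i then phat else 1 - phat)) *
        ∑ r ∈ Finset.range (k*s - s + 1),
          Pterm (k*s) p_ss p_as
            ((Finset.univ.filter (fun i : Fin (k*s) => c i = true)).card) r *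
          Rval (k*s) s r
      = (fun M : Finset (Fin (k*s)) =>
          (phat ^ M.card * (1 - phat) ^ (k*s - M.card)) *
            ∑ r ∈ Finset.range (k*s - s + 1),
              Pterm (k*s) p_ss p_as M.card r * Rval (k*s) s r)
        (finsetEquiv (k*s) true c) := by
    intro c
    simp only [finsetEquiv, Equiv.coe_fn_mk]
    rw [c_weight c phat]
  rw [Fintype.sum_equiv (finsetEquiv (k*s) true) _
    (fun M : Finset (Fin (k*s)) =>
      (phat ^ M.card * (1 - phat) ^ (k*s - M.card)) *
        ∑ r ∈ Finset.range (k*s - s + 1),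
          Pterm (k*s) p_ss p_as M.card r * Rval (k*s) s r) stepc]
  rw [← Finset.powerset_univ, Finset.sum_powerset]
  rw [Finset.card_univ, Fintype.card_fin]
  refine Finset.sum_congr rfl fun m hm => ?_
  have step5 : ∑ M ∈ (Finset.univ : Finset (Fin (k*s))).powersetCard m,
      ((phat ^ M.card * (1 - phat) ^ (k*s - M.card)) *
        ∑ r ∈ Finset.range (k*s - s + 1),
          Pterm (k*s) p_ss p_as M.card r * Rval (k*s) s r)
      = ((k*s).choose m : ℝ) *
        ((phat ^ m * (1 - phat) ^ (k*s - m)) *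
          ∑ r ∈ Finset.range (k*s - s + 1),
            Pterm (k*s) p_ss p_as m r * Rval (k*s) s r) := by
    rw [Finset.sum_congr rfl (fun M hM => by
      rw [(Finset.mem_powersetCard.1 hM).2])]
    rw [Finset.sum_const, Finset.card_powersetCard, Finset.card_univ, Fintype.card_fin,
      nsmul_eq_mul]
  rw [step5]
  have hR : ∑ r ∈ Finset.range (k*s - s + 1),
        Pterm (k*s) p_ss p_as m r * Rval (k*s) s r
      = ((k*s : ℕ) : ℝ) * ∑ r ∈ Finset.range (k*s - s + 1),
          Pterm (k*s) p_ss p_as m r * ((k*s - s).choose r : ℝ) /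
            (((k*s).choose r : ℝ)) := by
    rw [Finset.mul_sum]
    refine Finset.sum_congr rfl fun r _ => ?_
    unfold Rval
    ring
  rw [hR]
  unfold Pterm
  ring
end
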